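/- arXiv:1211.3323 — 5 statements merged into one kernel-verified Lean document; each statement's English description precedes it below -/
import Mathlib

section
/- Let h ≥ t ≥ 1 be integers, n := h·t, let 0 ≤ s ≤ n be an integer, d := gcd(n,s) and m := n/d. Consider the Speh configuration points ux_a := ℓ(x_a) and uy_a := ℓ(y_a + 1) for a = 1,…,t. Then the following two statements are equivalent: (i) for every class ρ ∈ ℚ/ℤ, the number of indices a ∈ {1,…,t} with ρ(ux_a) = ρ equals the number of indices a with ρ(uy_a) = ρ; (ii) m divides t or m divides h. -/
open scoped BigOperators

/-- The weight ring `A⁺ = ℂ[ℚ]`, the group algebra of the additive group `ℚ`. -/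
abbrev Aplus : Type := AddMonoidAlgebra ℂ ℚ

/-- The basis element `q^x` of `A⁺`. -/
noncomputable def qpow (x : ℚ) : Aplus := AddMonoidAlgebra.single x 1

/-- `ℚ/ℤ`. -/
abbrev QmodZ : Type := ℚ ⧸ AddSubgroup.zmultiples (1 : ℚ)

/-- Reduction of a rational number modulo `ℤ`. -/
def ratMod (x : ℚ) : QmodZ := QuotientAddGroup.mk' _ x

/-- The invariant of a point of `ℚ²`: its second coordinate mod `ℤ`. -/
def invPt (v : ℚ × ℚ) : QmodZ := ratMod v.2

/-- The point `ℓ(x)` on the line of slope `slope` through the origin. -/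
def linePt (slope x : ℚ) : ℚ × ℚ := (x, slope * x)

/-- A lattice path: a starting point together with a list of steps;
`false` is an east step `(1,0)`, `true` a north-east step `(1,1)`. -/
structure LPath where
  start : ℚ × ℚ
  steps : List Bool

namespace LPath

/-- The displacement of a step. -/
def stepVec (b : Bool) : ℚ × ℚ := (1, if b then 1 else 0)

/-- The list of vertices of a path (including the first and last points). -/
def vertices (L : LPath) : List (ℚ × ℚ) :=
  L.steps.scanl (fun v b => v + stepVec b) L.start

/-- The endpoint of a path. -/
def endpt (L : LPath) : ℚ × ℚ :=
  L.steps.foldl (fun v b => v + stepVec b) L.start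

/-- The exponent of `q` in the weight of a path for degree `α`: a north-east
step starting at `(a,b)` contributes `-α·a`, an east step contributes `0`. -/
def expnt (α : ℕ) (L : LPath) : ℚ :=
  ((L.steps.zipIdx.map Prod.swap).map (fun p : ℕ × Bool =>
    if p.2 then -(α : ℚ) * (L.start.1 + (p.1 : ℚ)) else 0)).sum

/-- The weight of a path: the product of the weights of its steps. -/
noncomputable def weight (α : ℕ) (L : LPath) : Aplus := qpow (L.expnt α)

/-- All vertices of the path lie on or below the line of slope `slope`
through the origin. -/
def IsBelow (slope : ℚ) (L : LPath) : Prop :=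
  ∀ v ∈ L.vertices, v.2 ≤ slope * v.1

/-- No vertex of the path other than the first and the last lies on the
line of slope `slope` through the origin. -/
def OffLineInterior (slope : ℚ) (L : LPath) : Prop :=
  ∀ v ∈ (L.vertices.drop 1).dropLast, v.2 ≠ slope * v.1

/-- Dyck path: all vertices on or below the line. -/
def IsDyck (slope : ℚ) (L : LPath) : Prop := IsBelow slope L

/-- Strict Dyck path: Dyck, and no interior vertex on the line. -/
def IsStrictDyck (slope : ℚ) (L : LPath) : Prop :=
  IsBelow slope L ∧ OffLineInterior slope L

end LPath

/-- A `t`-path from `x` to `y`: for each `a`, the path `L a` goes from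
`x a` to `y a`. -/
def FamFromTo {t : ℕ} (x y : Fin t → ℚ × ℚ) (L : Fin t → LPath) : Prop :=
  ∀ a, (L a).start = x a ∧ (L a).endpt = y a

/-- A `t`-path is crossing if two distinct member paths share a vertex. -/
def Crossing {t : ℕ} (L : Fin t → LPath) : Prop :=
  ∃ a b, a ≠ b ∧ ∃ v, v ∈ (L a).vertices ∧ v ∈ (L b).vertices

/-- The weight of a `t`-path: the product of the weights of its members. -/
noncomputable def famWeight (α : ℕ) {t : ℕ} (L : Fin t → LPath) : Aplus :=
  ∏ a, (L a).weight α

/-- `Dyck(x,y)`: the sum of the weights of all Dyck `t`-paths from `x` to `y`. -/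
noncomputable def DyckPoly (α : ℕ) (slope : ℚ) {t : ℕ} (x y : Fin t → ℚ × ℚ) : Aplus :=
  ∑ᶠ L ∈ {L : Fin t → LPath | FamFromTo x y L ∧ ∀ a, (L a).IsDyck slope}, famWeight α L

/-- `Dyck⁺(x,y)`: the sum over the non-crossing Dyck `t`-paths only. -/
noncomputable def DyckPolyNC (α : ℕ) (slope : ℚ) {t : ℕ} (x y : Fin t → ℚ × ℚ) : Aplus :=
  ∑ᶠ L ∈ {L : Fin t → LPath |
    FamFromTo x y L ∧ (∀ a, (L a).IsDyck slope) ∧ ¬ Crossing L}, famWeight α L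

/-- `Dyck_strict(x,y)`: the sum over the strict Dyck `t`-paths. -/
noncomputable def DyckPolyStrict (α : ℕ) (slope : ℚ) {t : ℕ} (x y : Fin t → ℚ × ℚ) : Aplus :=
  ∑ᶠ L ∈ {L : Fin t → LPath | FamFromTo x y L ∧ ∀ a, (L a).IsStrictDyck slope}, famWeight α L

/-- `Dyck⁺_strict(x,y)`: the sum over the non-crossing strict Dyck `t`-paths. -/
noncomputable def DyckPolyStrictNC (α : ℕ) (slope : ℚ) {t : ℕ} (x y : Fin t → ℚ × ℚ) : Aplus :=
  ∑ᶠ L ∈ {L : Fin t → LPath |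
    FamFromTo x y L ∧ (∀ a, (L a).IsStrictDyck slope) ∧ ¬ Crossing L}, famWeight α L

/-- The starting points `ux_a = ℓ(x_a)`, `x_a = (t-h)/2 - (a-1)`, of the Speh
configuration with parameters `(h,t)`; here `a : Fin t` is `0`-based. -/
def spehUX (slope : ℚ) (h t : ℕ) (a : Fin t) : ℚ × ℚ :=
  linePt slope (((t : ℚ) - (h : ℚ)) / 2 - (a.val : ℚ))

/-- The end points `uy_a = ℓ(y_a + 1)`, `y_a = (t+h)/2 - a`, of the Speh
configuration with parameters `(h,t)`; here `a : Fin t` is `0`-based. -/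
def spehUY (slope : ℚ) (h t : ℕ) (a : Fin t) : ℚ × ℚ :=
  linePt slope (((t : ℚ) + (h : ℚ)) / 2 - (a.val : ℚ))

/-- The defining property of the permutation `w₀`: it matches invariants,
`ρ(x_{w a}) = ρ(y_a)` for all `a`, and it reverses the order within each
invariant class: `w b < w a` whenever `a < b` and `ρ(y_a) = ρ(y_b)`. -/
def IsW0 {t : ℕ} (x y : Fin t → ℚ × ℚ) (w : Equiv.Perm (Fin t)) : Prop :=
  (∀ a, invPt (x (w a)) = invPt (y a)) ∧
  ∀ a b : Fin t, a < b → invPt (y a) = invPt (y b) → w b < w a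


namespace SpehAux

lemma cnt_eq (m : ℕ) (hm : 0 < m) (c : ℤ) (t : ℕ) :
    (∑ a ∈ Finset.range t, if (m:ℤ) ∣ (a:ℤ) - c then 1 else 0)
      = (t + m - 1 - (c % (m:ℤ)).toNat) / m := by
  have hmz : (0:ℤ) < (m:ℤ) := by exact_mod_cast hm
  set c₀ : ℕ := (c % (m:ℤ)).toNat with hc₀def
  have h0 : (c₀ : ℤ) = c % (m:ℤ) := Int.toNat_of_nonneg (Int.emod_nonneg c hmz.ne')
  have hlt : c₀ < m := by
    have h1 := Int.emod_lt_of_pos c hmz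
    omega
  have hdvd : (m:ℤ) ∣ c - (c₀:ℤ) := by
    rw [h0]
    exact ⟨c / m, by rw [Int.emod_def]; ring⟩
  induction t with
  | zero =>
      rw [Finset.sum_range_zero]
      exact (Nat.div_eq_of_lt (by omega)).symm
  | succ t ih =>
      rw [Finset.sum_range_succ, ih]
      have h2 : (m:ℤ) ∣ ((m:ℤ) + (c - (c₀:ℤ))) := dvd_add dvd_rfl hdvd
      have e1 : ((t + m - c₀ : ℕ) : ℤ) = (t:ℤ) + m - c₀ := by omega
      have key : ((m:ℤ) ∣ (t:ℤ) - c) ↔ m ∣ (t + m - c₀) := by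
        rw [← Int.natCast_dvd_natCast, e1,
          show (t:ℤ) + m - c₀ = ((m:ℤ) + (c - c₀)) + ((t:ℤ) - c) by ring,
          dvd_add_right h2]
      have e2 : t + 1 + m - 1 - c₀ = (t + m - 1 - c₀) + 1 := by omega
      have e3 : (t + m - 1 - c₀) + 1 = t + m - c₀ := by omega
      rw [e2, Nat.succ_div, e3]
      by_cases hd : (m:ℤ) ∣ (t:ℤ) - c
      · rw [if_pos hd, if_pos (key.mp hd)]
      · rw [if_neg hd, if_neg (fun hh => hd (key.mpr hh))]

lemma F_eq (m : ℕ) (hm : 0 < m) (t c₀ : ℕ) (hc : c₀ < m) :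
    (t + m - 1 - c₀) / m = t / m + if c₀ < t % m then 1 else 0 := by
  have h1 : t % m < m := Nat.mod_lt _ hm
  have h2 : m * (t / m) + t % m = t := Nat.div_add_mod t m
  have e : t + m - 1 - c₀ = m * (t / m) + (t % m + m - 1 - c₀) := by omega
  rw [e, Nat.mul_add_div hm]
  congr 1
  by_cases hlt : c₀ < t % m
  · rw [if_pos hlt]
    have e2 : t % m + m - 1 - c₀ = m * 1 + (t % m - 1 - c₀) := by omega
    rw [e2, Nat.mul_add_div hm, Nat.div_eq_of_lt (by omega)]
  · rw [if_neg hlt, Nat.div_eq_of_lt (by omega)]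

lemma dvd_iff_aux (n s : ℕ) (hn : 0 < n) (w : ℤ) :
    ((n:ℤ) ∣ (s:ℤ) * w) ↔ ((n / Nat.gcd n s : ℕ) : ℤ) ∣ w := by
  set d := Nat.gcd n s with hd
  have hd0 : 0 < d := Nat.gcd_pos_of_pos_left _ hn
  have hdn : d ∣ n := Nat.gcd_dvd_left n s
  have hds : d ∣ s := Nat.gcd_dvd_right n s
  have hco : Nat.Coprime (n / d) (s / d) := Nat.coprime_div_gcd_div_gcd hd0
  have hn' : (n:ℤ) = (d:ℤ) * ((n / d : ℕ) : ℤ) := by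
    rw [← Nat.cast_mul, Nat.mul_div_cancel' hdn]
  have hs' : (s:ℤ) = (d:ℤ) * ((s / d : ℕ) : ℤ) := by
    rw [← Nat.cast_mul, Nat.mul_div_cancel' hds]
  rw [hn', hs', mul_assoc,
    mul_dvd_mul_iff_left (show (d:ℤ) ≠ 0 by exact_mod_cast hd0.ne')]
  constructor
  · intro hdd
    have hcopZ : IsCoprime ((n / d : ℕ) : ℤ) ((s / d : ℕ) : ℤ) := by
      rw [Int.isCoprime_iff_gcd_eq_one, Int.gcd_natCast_natCast]
      exact hco
    exact hcopZ.dvd_of_dvd_mul_left hdd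
  · intro hdd
    exact Dvd.dvd.mul_left hdd _

lemma period_gcd (P : ℤ → Prop) (m h : ℕ)
    (hPer : ∀ c, P (c + m) ↔ P c) (hH : ∀ c, P (c + h) ↔ P c) :
    ∀ c, P (c + (Nat.gcd m h : ℤ)) ↔ P c := by
  have gen : ∀ (d : ℕ), (∀ c, P (c + d) ↔ P c) → ∀ (k : ℤ) (c), P (c + k * d) ↔ P c := by
    intro d hd k
    induction k using Int.induction_on with
    | zero => intro c; simp
    | succ i ih =>
        intro c
        have h1 := hd (c + (i:ℤ) * d)
        rw [show c + ((i:ℤ) + 1) * d = c + (i:ℤ) * d + d by ring, h1, ih]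
    | pred i ih =>
        intro c
        have h1 := hd (c + (-(i:ℤ) - 1) * d)
        rw [show c + (-(i:ℤ) - 1) * d + d = c + (-(i:ℤ)) * d by ring] at h1
        exact h1.symm.trans (ih c)
  intro c
  have hb : (Nat.gcd m h : ℤ) = (m:ℤ) * Nat.gcdA m h + (h:ℤ) * Nat.gcdB m h :=
    Nat.gcd_eq_gcd_ab m h
  rw [show c + (Nat.gcd m h : ℤ) = c + Nat.gcdB m h * h + Nat.gcdA m h * m by rw [hb]; ring,
    gen m hPer (Nat.gcdA m h), gen h hH (Nat.gcdB m h)]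

lemma forward_core (m h t : ℕ) (hm : 0 < m) (hnt : ¬ m ∣ t)
    (H : ∀ c : ℤ, c % (m:ℤ) < ((t % m : ℕ) : ℤ) ↔ (c + h) % (m:ℤ) < ((t % m : ℕ) : ℤ)) :
    m ∣ h := by
  by_contra hmh
  have hmz : (0:ℤ) < (m:ℤ) := by exact_mod_cast hm
  set r : ℕ := t % m with hrdef
  have hr0 : 0 < r := Nat.pos_of_ne_zero fun h0 => hnt (Nat.dvd_of_mod_eq_zero h0)
  have hrm : r < m := Nat.mod_lt _ hm
  set P : ℤ → Prop := fun c => c % (m:ℤ) < (r:ℤ) with hPdef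
  have hPer : ∀ c, P (c + m) ↔ P c := fun c => by
    simp only [hPdef]
    rw [show c + (m:ℤ) = c + (m:ℤ) * 1 by ring, Int.add_mul_emod_self_left]
  have hH' : ∀ c, P (c + h) ↔ P c := fun c => (H c).symm
  have hg := period_gcd P m h hPer hH'
  set g : ℕ := Nat.gcd m h with hgdef
  have hg0 : 0 < g := Nat.gcd_pos_of_pos_left _ hm
  have hgm : g ∣ m := Nat.gcd_dvd_left m h
  have hgh : g ∣ h := Nat.gcd_dvd_right m h
  have hgne : g ≠ m := fun he => hmh (he ▸ hgh)
  have h2g : 2 * g ≤ m := by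
    obtain ⟨k, hk⟩ := hgm
    have hk2 : 2 ≤ k := by
      by_contra hklt
      interval_cases k <;> omega
    have := Nat.mul_le_mul_left g hk2
    omega
  have hP1 : P ((r:ℤ) - 1) := by
    simp only [hPdef]
    rw [Int.emod_eq_of_lt (by omega) (by omega)]
    omega
  have hP1g : P ((r:ℤ) - 1 + g) := (hg _).mpr hP1
  have hge : (m:ℤ) ≤ (r:ℤ) - 1 + g := by
    by_contra hlt
    push_neg at hlt
    simp only [hPdef] at hP1g
    rw [Int.emod_eq_of_lt (by omega) (by omega)] at hP1g
    omega
  have hP2 : P ((r:ℤ) - g) := by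
    simp only [hPdef]
    rw [Int.emod_eq_of_lt (by omega) (by omega)]
    omega
  have hP2g : P ((r:ℤ) - g + g) := (hg _).mpr hP2
  simp only [hPdef] at hP2g
  rw [show (r:ℤ) - g + g = (r:ℤ) by ring,
    Int.emod_eq_of_lt (by omega) (by omega)] at hP2g
  omega


lemma ratMod_eq_iff (x y : ℚ) : ratMod x = ratMod y ↔ ∃ k : ℤ, y - x = (k:ℚ) := by
  rw [ratMod, ratMod, QuotientAddGroup.mk'_eq_mk']
  constructor
  · rintro ⟨z, hz, hxz⟩
    obtain ⟨k, hk⟩ := AddSubgroup.mem_zmultiples_iff.mp hz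
    refine ⟨k, ?_⟩
    have hzk : (k:ℚ) = z := by simpa [zsmul_eq_mul] using hk
    rw [hzk, ← hxz]; ring
  · rintro ⟨k, hk⟩
    exact ⟨(k:ℚ), AddSubgroup.mem_zmultiples_iff.mpr ⟨k, by simp⟩, by rw [← hk]; ring⟩

end SpehAux


/-- Lemma 7 (Lemma `combinatoriallemma`): for the Speh configuration with
parameters `(h,t)`, `h ≥ t ≥ 1`, `n = h·t`, `0 ≤ s ≤ n`, `d = gcd(n,s)`,
`m = n/d`, the invariants of the points `ux_a` and `uy_a` are equidistributed
if and only if `m ∣ t` or `m ∣ h`. -/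
theorem statement0 (h t : ℕ) (ht : 1 ≤ t) (hth : t ≤ h) (s : ℕ) (hs : s ≤ h * t) :
    let n : ℕ := h * t
    let slope : ℚ := (s : ℚ) / (n : ℚ)
    let ux : Fin t → ℚ × ℚ := spehUX slope h t
    let uy : Fin t → ℚ × ℚ := spehUY slope h t
    let m : ℕ := n / Nat.gcd n s
    ((∀ ρ : QmodZ,
        Nat.card {a : Fin t // invPt (ux a) = ρ} = Nat.card {a : Fin t // invPt (uy a) = ρ})
      ↔ (m ∣ t ∨ m ∣ h)) := by
  intro n slope ux uy m
  classical
  have hn : 0 < n := Nat.mul_pos (ht.trans hth) ht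
  have hd0 : 0 < Nat.gcd n s := Nat.gcd_pos_of_pos_left _ hn
  have hm0 : 0 < m := Nat.div_pos (Nat.le_of_dvd hn (Nat.gcd_dvd_left n s)) hd0
  have hmz : (0:ℤ) < (m:ℤ) := by exact_mod_cast hm0
  have hnq : ((n:ℕ):ℚ) ≠ 0 := Nat.cast_ne_zero.mpr hn.ne'
  set φ : ℤ → QmodZ := fun k => ratMod (slope * (((t:ℚ) - (h:ℚ)) / 2 - (k:ℚ))) with hφdef
  have hux : ∀ a : Fin t, invPt (ux a) = φ ((a:ℕ):ℤ) := by
    intro a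
    show ratMod (slope * (((t:ℚ) - (h:ℚ)) / 2 - ((a:ℕ):ℚ)))
      = ratMod (slope * (((t:ℚ) - (h:ℚ)) / 2 - ((((a:ℕ):ℤ) : ℤ):ℚ)))
    congr 1
    all_goals (push_cast; ring)
  have huy : ∀ a : Fin t, invPt (uy a) = φ (((a:ℕ):ℤ) - (h:ℤ)) := by
    intro a
    show ratMod (slope * (((t:ℚ) + (h:ℚ)) / 2 - ((a:ℕ):ℚ)))
      = ratMod (slope * (((t:ℚ) - (h:ℚ)) / 2 - (((((a:ℕ):ℤ) - (h:ℤ)) : ℤ):ℚ)))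
    congr 1
    all_goals (push_cast; ring)
  have hφiff : ∀ j k : ℤ, φ j = φ k ↔ (m:ℤ) ∣ j - k := by
    intro j k
    simp only [hφdef]
    rw [SpehAux.ratMod_eq_iff]
    have harg : ∀ z : ℤ,
        (slope * (((t:ℚ) - (h:ℚ)) / 2 - (k:ℚ)) - slope * (((t:ℚ) - (h:ℚ)) / 2 - (j:ℚ)) = (z:ℚ))
        ↔ ((s:ℤ) * (j - k) = z * (n:ℤ)) := by
      intro z
      have hsl : slope = (s:ℚ) / (n:ℚ) := rfl
      rw [hsl, show (s:ℚ)/(n:ℚ) * (((t:ℚ)-(h:ℚ))/2 - (k:ℚ))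
            - (s:ℚ)/(n:ℚ) * (((t:ℚ)-(h:ℚ))/2 - (j:ℚ))
          = ((s:ℚ) * ((j:ℚ) - (k:ℚ))) / (n:ℚ) by ring, div_eq_iff hnq]
      constructor
      · intro hz; exact_mod_cast hz
      · intro hz; exact_mod_cast hz
    constructor
    · rintro ⟨z, hz⟩
      have h1 : (s:ℤ) * (j - k) = z * (n:ℤ) := (harg z).mp hz
      have h2 : (n:ℤ) ∣ (s:ℤ) * (j - k) := ⟨z, by linarith⟩
      exact (SpehAux.dvd_iff_aux n s hn (j - k)).mp h2
    · intro hdvd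
      obtain ⟨z, hz⟩ := (SpehAux.dvd_iff_aux n s hn (j - k)).mpr hdvd
      exact ⟨z, (harg z).mpr (by linarith)⟩
  have hcard : ∀ (c : ℤ) (p : Fin t → Prop), (∀ a, p a ↔ (m:ℤ) ∣ ((a:ℕ):ℤ) - c) →
      Nat.card {a : Fin t // p a} = (t + m - 1 - (c % (m:ℤ)).toNat) / m := by
    intro c p hp
    rw [Nat.card_congr (Equiv.subtypeEquivRight hp), Nat.card_eq_fintype_card,
      Fintype.card_subtype, Finset.card_filter, ← SpehAux.cnt_eq m hm0 c t]
    exact Fin.sum_univ_eq_sum_range (fun a => if (m:ℤ) ∣ (a:ℤ) - c then 1 else 0) t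
  constructor
  · intro H
    by_cases hmt : m ∣ t
    · exact Or.inl hmt
    refine Or.inr (SpehAux.forward_core m h t hm0 hmt ?_)
    intro c
    have hc1 := hcard c (fun a => invPt (ux a) = φ c) (fun a => by
      show invPt (ux a) = φ c ↔ (m:ℤ) ∣ ((a:ℕ):ℤ) - c
      rw [hux a, hφiff])
    have hc2 := hcard (c + h) (fun a => invPt (uy a) = φ c) (fun a => by
      show invPt (uy a) = φ c ↔ (m:ℤ) ∣ ((a:ℕ):ℤ) - (c + (h:ℤ))
      rw [huy a, hφiff, show ((a:ℕ):ℤ) - (h:ℤ) - c = ((a:ℕ):ℤ) - (c + (h:ℤ)) by ring])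
    have hVal : (t + m - 1 - (c % (m:ℤ)).toNat) / m
        = (t + m - 1 - ((c + h) % (m:ℤ)).toNat) / m := by
      rw [← hc1, ← hc2]
      exact H (φ c)
    have hA : ((c % (m:ℤ)).toNat : ℤ) = c % (m:ℤ) :=
      Int.toNat_of_nonneg (Int.emod_nonneg _ hmz.ne')
    have hB : (((c + h) % (m:ℤ)).toNat : ℤ) = (c + h) % (m:ℤ) :=
      Int.toNat_of_nonneg (Int.emod_nonneg _ hmz.ne')
    have hAlt : (c % (m:ℤ)).toNat < m := by
      have := Int.emod_lt_of_pos c hmz; omega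
    have hBlt : ((c + h) % (m:ℤ)).toNat < m := by
      have := Int.emod_lt_of_pos (c + h) hmz; omega
    rw [SpehAux.F_eq m hm0 t _ hAlt, SpehAux.F_eq m hm0 t _ hBlt] at hVal
    rw [← hA, ← hB]
    set q : ℕ := t / m with hq
    split_ifs at hVal with h1 h2 h2 <;> omega
  · intro hOr ρ
    rcases hOr with hmt | hmh
    · by_cases hex : ∃ j : ℤ, φ j = ρ
      · obtain ⟨j, hj⟩ := hex
        have hc1 := hcard j (fun a => invPt (ux a) = ρ) (fun a => by
          show invPt (ux a) = ρ ↔ (m:ℤ) ∣ ((a:ℕ):ℤ) - j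
          rw [← hj, hux a, hφiff])
        have hc2 := hcard (j + h) (fun a => invPt (uy a) = ρ) (fun a => by
          show invPt (uy a) = ρ ↔ (m:ℤ) ∣ ((a:ℕ):ℤ) - (j + (h:ℤ))
          rw [← hj, huy a, hφiff,
            show ((a:ℕ):ℤ) - (h:ℤ) - j = ((a:ℕ):ℤ) - (j + (h:ℤ)) by ring])
        rw [hc1, hc2]
        obtain ⟨q, hqt⟩ := hmt
        have e1 : ∀ c : ℤ, (t + m - 1 - (c % (m:ℤ)).toNat) / m = q := by
          intro c
          have hn0 : (0:ℤ) ≤ c % (m:ℤ) := Int.emod_nonneg _ hmz.ne'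
          have hltc : (c % (m:ℤ)).toNat < m := by
            have := Int.emod_lt_of_pos c hmz; omega
          rw [show t + m - 1 - (c % (m:ℤ)).toNat
              = m * q + (m - 1 - (c % (m:ℤ)).toNat) by omega,
            Nat.mul_add_div hm0, Nat.div_eq_of_lt (by omega), add_zero]
        rw [e1, e1]
      · push_neg at hex
        have h1 : IsEmpty {a : Fin t // invPt (ux a) = ρ} :=
          ⟨fun x => hex ((x.1:ℕ):ℤ) (by rw [← hux x.1]; exact x.2)⟩
        have h2 : IsEmpty {a : Fin t // invPt (uy a) = ρ} :=
          ⟨fun x => hex (((x.1:ℕ):ℤ) - (h:ℤ)) (by rw [← huy x.1]; exact x.2)⟩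
        rw [Nat.card_of_isEmpty, Nat.card_of_isEmpty]
    · have hpt : ∀ a : Fin t, invPt (uy a) = invPt (ux a) := by
        intro a
        rw [hux a, huy a]
        exact (hφiff _ _).mpr (by
          rw [show ((a:ℕ):ℤ) - (h:ℤ) - ((a:ℕ):ℤ) = -(h:ℤ) by ring]
          exact dvd_neg.mpr (Int.natCast_dvd_natCast.mpr hmh))
      exact Nat.card_congr (Equiv.subtypeEquivRight (fun a => by
        show invPt (ux a) = ρ ↔ invPt (uy a) = ρ
        rw [hpt a]))
end

section
/- Consider the Speh configuration with parameters (h,t), h ≥ t ≥ 1, n := h·t, and an integer 0 < s < n; fix a positive integer α. Then there is at most one permutation w of {1,…,t} with Dyck⁺_strict(ux^w, uy) ≠ 0 in A⁺; moreover, if such a permutation w exists, then for every class ρ ∈ ℚ/ℤ the number of indices a with ρ(ux_a) = ρ equals the number of indices a with ρ(uy_a) = ρ, and w equals the permutation w_0. -/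
open scoped BigOperators

lemma ratMod_eq_iff {x y : ℚ} : ratMod x = ratMod y ↔ ∃ k : ℤ, x - y = (k : ℚ) := by
  unfold ratMod
  rw [QuotientAddGroup.mk'_apply, QuotientAddGroup.mk'_apply, QuotientAddGroup.eq_iff_sub_mem]
  constructor
  · intro hm
    rcases AddSubgroup.mem_zmultiples_iff.1 hm with ⟨k, hk⟩
    exact ⟨k, by simpa using hk.symm⟩
  · rintro ⟨k, hk⟩
    exact AddSubgroup.mem_zmultiples_iff.2 ⟨k, by simpa using hk.symm⟩

namespace LPath

def pt (L : LPath) (i : ℕ) : ℚ × ℚ :=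
  (L.steps.take i).foldl (fun v b => v + stepVec b) L.start

lemma foldl_fst (l : List Bool) (v : ℚ × ℚ) :
    (l.foldl (fun v b => v + stepVec b) v).1 = v.1 + l.length := by
  induction l generalizing v with
  | nil => simp
  | cons b l ih =>
    rw [List.foldl_cons, ih]
    simp [stepVec, Prod.fst_add]; ring

lemma foldl_snd (l : List Bool) (v : ℚ × ℚ) :
    (l.foldl (fun v b => v + stepVec b) v).2 = v.2 + (l.count true : ℚ) := by
  induction l generalizing v with
  | nil => simp
  | cons b l ih =>
    rw [List.foldl_cons, ih]
    cases b <;> simp [stepVec, List.count_cons, Prod.snd_add] <;> push_cast <;> ring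

lemma pt_zero (L : LPath) : L.pt 0 = L.start := rfl

lemma pt_len (L : LPath) : L.pt L.steps.length = L.endpt := by
  simp [pt, endpt, List.take_length]

lemma pt_fst (L : LPath) (i : ℕ) :
    (L.pt i).1 = L.start.1 + min i L.steps.length := by
  rw [pt, foldl_fst]; simp [List.length_take]

lemma pt_snd (L : LPath) (i : ℕ) :
    (L.pt i).2 = L.start.2 + ((L.steps.take i).count true : ℚ) := by
  rw [pt, foldl_snd]

lemma endpt_fst (L : LPath) : L.endpt.1 = L.start.1 + L.steps.length := foldl_fst _ _

lemma invPt_endpt (L : LPath) : invPt L.endpt = invPt L.start := by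
  unfold invPt
  rw [ratMod_eq_iff]
  refine ⟨L.steps.count true, ?_⟩
  rw [endpt, foldl_snd]; push_cast; ring

lemma scanl_getElem {α β : Type*} (f : β → α → β) (b : β) (l : List α) (i : ℕ)
    (h : i < (List.scanl f b l).length) :
    (List.scanl f b l)[i] = (l.take i).foldl f b := by
  induction l generalizing b i with
  | nil =>
    simp [List.length_scanl] at h
    subst h; simp
  | cons a l ih =>
    cases i with
    | zero => simp
    | succ i =>
      simp only [List.scanl_cons, List.getElem_cons_succ, List.take_succ_cons, List.foldl_cons]
      exact ih (f b a) i (by simp [List.length_scanl] at h ⊢; omega)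

lemma vertices_length (L : LPath) : L.vertices.length = L.steps.length + 1 := by
  simp [vertices, List.length_scanl]

lemma vertices_getElem (L : LPath) (i : ℕ) (h : i < L.vertices.length) :
    L.vertices[i] = L.pt i :=
  scanl_getElem _ _ _ _ h

lemma pt_mem_vertices (L : LPath) {i : ℕ} (hi : i ≤ L.steps.length) :
    L.pt i ∈ L.vertices := by
  have h : i < L.vertices.length := by rw [vertices_length]; omega
  rw [← vertices_getElem L i h]
  exact List.getElem_mem h

lemma pt_mem_interior (L : LPath) {i : ℕ} (h0 : 0 < i) (hl : i < L.steps.length) :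
    L.pt i ∈ (L.vertices.drop 1).dropLast := by
  have hlen := L.vertices_length
  have hj : i - 1 < ((L.vertices.drop 1).dropLast).length := by
    rw [List.length_dropLast, List.length_drop, hlen]; omega
  have heq : ((L.vertices.drop 1).dropLast)[i-1] = L.pt i := by
    rw [List.getElem_dropLast, List.getElem_drop]
    rw [vertices_getElem]
    congr 1; omega
  rw [← heq]
  exact List.getElem_mem hj

lemma count_take_mono (l : List Bool) (i : ℕ) :
    (l.take i).count true ≤ (l.take (i+1)).count true := by
  have hsub : List.Sublist (l.take i) (l.take (i+1)) := by
    have : l.take i = (l.take (i+1)).take i := by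
      rw [List.take_take]; congr 1; omega
    rw [this]; exact List.take_sublist _ _
  exact hsub.count_le _

lemma count_take_succ_le (l : List Bool) (i : ℕ) :
    (l.take (i+1)).count true ≤ (l.take i).count true + 1 := by
  rw [List.take_succ, List.count_append]
  have : (l[i]?.toList).count true ≤ 1 := by
    cases h : l[i]? <;> simp [List.count_le_length, Option.toList]
    exact List.count_le_length |>.trans (by simp)
  omega

end LPath

lemma ivt_int (f : ℕ → ℤ) (m : ℕ) (h0 : f 0 < 0) (hm : 0 < f m)
    (hstep : ∀ i, i < m → f (i+1) ≤ f i + 1) : ∃ i, i ≤ m ∧ f i = 0 := by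
  induction m with
  | zero => omega
  | succ m ih =>
    by_cases hfm : 0 < f m
    · obtain ⟨i, him, hfi⟩ := ih hfm (fun i hi => hstep i (by omega))
      exact ⟨i, by omega, hfi⟩
    · have h1 := hstep m (by omega)
      exact ⟨m, by omega, by omega⟩

open LPath in
lemma speh_main (h t : ℕ) (ht : 1 ≤ t) (hth : t ≤ h) (slope : ℚ)
    (w : Equiv.Perm (Fin t)) (L : Fin t → LPath)
    (hft : FamFromTo (fun a => spehUX slope h t (w a)) (spehUY slope h t) L)
    (hsd : ∀ a, (L a).IsStrictDyck slope)
    (hnc : ¬ Crossing L) :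
    IsW0 (spehUX slope h t) (spehUY slope h t) w := by
  have hlenn : ∀ a : Fin t, (L a).steps.length + a.val = h + (w a).val := by
    intro a
    have h1 := (hft a).1
    have h2 := (hft a).2
    have h3 := (L a).endpt_fst
    rw [h1, h2] at h3
    simp only [spehUX, spehUY, linePt] at h3
    have h4 : (((L a).steps.length + a.val : ℕ) : ℚ) = ((h + (w a).val : ℕ) : ℚ) := by
      push_cast
      linarith
    exact Nat.cast_injective h4
  have hc1 : ∀ a, invPt (spehUX slope h t (w a)) = invPt (spehUY slope h t a) := by
    intro a
    have h1 : (L a).start = spehUX slope h t (w a) := (hft a).1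
    have h2 : (L a).endpt = spehUY slope h t a := (hft a).2
    rw [← h1, ← h2]
    exact ((L a).invPt_endpt).symm
  refine ⟨hc1, ?_⟩
  intro a b hab hcl
  by_contra hno
  have hwab : w a < w b :=
    lt_of_le_of_ne (not_lt.1 hno) (fun he => hab.ne (w.injective he))
  set av := a.val with hav
  set bv := b.val with hbv
  set wa := (w a).val with hwa
  set wb := (w b).val with hwb
  have habv : av < bv := hab
  have hwv : wa < wb := hwab
  have hbt : bv < t := b.isLt
  set lenA := (L a).steps.length with hlA
  set lenB := (L b).steps.length with hlB
  have HA : lenA + av = h + wa := hlenn a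
  have HB : lenB + bv = h + wb := hlenn b
  set e := wb - wa with he
  set m := h + wa - bv with hm
  have hme : m + e = lenB := by omega
  have hm0 : 0 < m := by omega
  have hmA : m < lenA := by omega
  have he0 : 0 < e := by omega
  have heB : e < lenB := by omega
  have heQ : (e : ℚ) = (wb : ℚ) - wa := by
    rw [he, Nat.cast_sub (le_of_lt hwv)]
  -- starts
  have hsa : (L a).start = spehUX slope h t (w a) := (hft a).1
  have hsb : (L b).start = spehUX slope h t (w b) := (hft b).1
  have hsa1 : (L a).start.1 = ((t : ℚ) - h)/2 - wa := by rw [hsa]; rfl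
  have hsb1 : (L b).start.1 = ((t : ℚ) - h)/2 - wb := by rw [hsb]; rfl
  have hsa2 : (L a).start.2 = slope * (L a).start.1 := by rw [hsa]; rfl
  -- integrality of start height difference
  have hxx : invPt (spehUX slope h t (w a)) = invPt (spehUX slope h t (w b)) :=
    (hc1 a).trans (hcl.trans (hc1 b).symm)
  have hxx2 : ratMod ((L a).start.2) = ratMod ((L b).start.2) := by
    rw [hsa, hsb]; exact hxx
  obtain ⟨z, hz⟩ := ratMod_eq_iff.1 hxx2
  have hz2 : (L b).start.2 - (L a).start.2 = -(z : ℚ) := by linarith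
  -- the integer-valued height difference
  set jA : ℕ → ℕ := fun i => (((L a).steps.take i).count true) with hjA
  set jB : ℕ → ℕ := fun i => (((L b).steps.take i).count true) with hjB
  set D : ℕ → ℤ := fun i => (jB (i+e) : ℤ) - (jA i : ℤ) - z with hDdef
  have hD : ∀ i : ℕ, ((D i : ℤ) : ℚ) = ((L b).pt (i+e)).2 - ((L a).pt i).2 := by
    intro i
    rw [(L b).pt_snd, (L a).pt_snd]
    simp only [hDdef]
    push_cast
    have := hz2
    simp only [hjA, hjB]
    push_cast
    linarith
  -- x-coordinates align
  have hX : ∀ i : ℕ, i ≤ m → ((L b).pt (i+e)).1 = ((L a).pt i).1 := by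
    intro i him
    rw [(L b).pt_fst, (L a).pt_fst, hsa1, hsb1]
    rw [min_eq_left (by omega : i + e ≤ lenB), min_eq_left (by omega : i ≤ lenA)]
    push_cast [heQ]
    ring
  -- sign at 0
  have hD0 : D 0 < 0 := by
    have hbelow := (hsd b).1 _ ((L b).pt_mem_vertices (le_of_lt heB))
    have hoff := (hsd b).2 _ ((L b).pt_mem_interior he0 heB)
    have hlt : ((L b).pt (0+e)).2 < slope * ((L b).pt (0+e)).1 := by
      rw [zero_add]; exact lt_of_le_of_ne hbelow hoff
    have hq : ((D 0 : ℤ) : ℚ) < 0 := by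
      rw [hD 0]
      have hx0 := hX 0 (le_of_lt hm0)
      have hpa0 : ((L a).pt 0) = (L a).start := (L a).pt_zero
      rw [hpa0] at hx0 ⊢
      rw [hsa2, ← hx0]
      linarith
    exact_mod_cast hq
  -- sign at m
  have hDm : 0 < D m := by
    have hbelow := (hsd a).1 _ ((L a).pt_mem_vertices (le_of_lt hmA))
    have hoff := (hsd a).2 _ ((L a).pt_mem_interior hm0 hmA)
    have hlt : ((L a).pt m).2 < slope * ((L a).pt m).1 := lt_of_le_of_ne hbelow hoff
    have hend : ((L b).pt (m+e)).2 = slope * ((L b).pt (m+e)).1 := by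
      rw [hme, (L b).pt_len, (hft b).2]
      rfl
    have hq : (0 : ℚ) < ((D m : ℤ) : ℚ) := by
      rw [hD m, hend, hX m le_rfl]
      linarith
    exact_mod_cast hq
  -- step bound
  have hstep : ∀ i, i < m → D (i+1) ≤ D i + 1 := by
    intro i _
    have h1 : jB (i+e) ≤ jB (i+1+e) ∧ jB (i+1+e) ≤ jB (i+e) + 1 := by
      have hr : i+1+e = (i+e)+1 := by omega
      rw [hr]
      exact ⟨count_take_mono _ _, count_take_succ_le _ _⟩
    have h2 : jA i ≤ jA (i+1) ∧ jA (i+1) ≤ jA i + 1 :=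
      ⟨count_take_mono _ _, count_take_succ_le _ _⟩
    simp only [hDdef]
    omega
  obtain ⟨i0, hi0m, hDz⟩ := ivt_int D m hD0 hDm hstep
  -- shared vertex
  have hsnd : ((L b).pt (i0+e)).2 = ((L a).pt i0).2 := by
    have := hD i0
    rw [hDz] at this
    push_cast at this
    linarith
  have hveq : (L a).pt i0 = (L b).pt (i0+e) :=
    Prod.ext (hX i0 hi0m).symm hsnd.symm
  apply hnc
  exact ⟨a, b, hab.ne, (L a).pt i0,
    (L a).pt_mem_vertices (by omega),
    by rw [hveq]; exact (L b).pt_mem_vertices (by omega)⟩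

lemma antitone_unique {n : ℕ} (F G : Finset (Fin n)) (f g : Fin n → Fin n)
    (hfm : ∀ c ∈ F, f c ∈ G) (hgm : ∀ c ∈ F, g c ∈ G)
    (hcard : G.card = F.card)
    (hfa : ∀ p ∈ F, ∀ q ∈ F, p < q → f q < f p)
    (hga : ∀ p ∈ F, ∀ q ∈ F, p < q → g q < g p)
    {c : Fin n} (hc : c ∈ F) : f c = g c := by
  set k := F.card with hk
  have hF : F.card = k := rfl
  set eF : Fin k ↪o Fin n := F.orderEmbOfFin hF with heF
  have hmemF : ∀ i : Fin k, eF i ∈ F := fun i => F.orderEmbOfFin_mem hF i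
  have key : ∀ f : Fin n → Fin n, (∀ c ∈ F, f c ∈ G) →
      (∀ p ∈ F, ∀ q ∈ F, p < q → f q < f p) →
      (fun i : Fin k => f (eF i.rev)) = G.orderEmbOfFin hcard := by
    intro f hm ha
    apply Finset.orderEmbOfFin_unique
    · intro i; exact hm _ (hmemF _)
    · intro i j hij
      exact ha _ (hmemF _) _ (hmemF _) (eF.strictMono (Fin.rev_lt_rev.2 hij))
  have hfg := (key f hfm hfa).trans (key g hgm hga).symm
  have hcr : c ∈ Set.range eF := by
    rw [heF, Finset.range_orderEmbOfFin]; exact hc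
  obtain ⟨i, hi⟩ := hcr
  have := congrFun hfg i.rev
  simpa [Fin.rev_rev, hi] using this

lemma isW0_unique {t : ℕ} {x y : Fin t → ℚ × ℚ} {w w' : Equiv.Perm (Fin t)}
    (hw : IsW0 x y w) (hw' : IsW0 x y w') : w = w' := by
  classical
  apply Equiv.ext
  intro a
  set ρ := invPt (y a) with hρ
  set F : Finset (Fin t) := Finset.univ.filter (fun c => invPt (y c) = ρ) with hF
  set G : Finset (Fin t) := Finset.univ.filter (fun c => invPt (x c) = ρ) with hG
  have hmem : ∀ (u : Equiv.Perm (Fin t)), IsW0 x y u → ∀ c ∈ F, u c ∈ G := by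
    intro u hu c hcF
    simp only [hF, Finset.mem_filter, Finset.mem_univ, true_and] at hcF
    simp only [hG, Finset.mem_filter, Finset.mem_univ, true_and]
    rw [hu.1 c, hcF]
  have himg : Finset.image (w : Fin t → Fin t) F = G := by
    ext c
    constructor
    · intro hcm
      obtain ⟨p, hp, hpc⟩ := Finset.mem_image.1 hcm
      rw [← hpc]; exact hmem w hw p hp
    · intro hcG
      simp only [hG, Finset.mem_filter, Finset.mem_univ, true_and] at hcG
      refine Finset.mem_image.2 ⟨w.symm c, ?_, by simp⟩
      simp only [hF, Finset.mem_filter, Finset.mem_univ, true_and]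
      rw [← hw.1 (w.symm c)]
      simpa using hcG
  have hcard : G.card = F.card := by
    rw [← himg]
    exact Finset.card_image_of_injOn (w.injective.injOn)
  have hanti : ∀ (u : Equiv.Perm (Fin t)), IsW0 x y u →
      ∀ p ∈ F, ∀ q ∈ F, p < q → u q < u p := by
    intro u hu p hpF q hqF hpq
    simp only [hF, Finset.mem_filter, Finset.mem_univ, true_and] at hpF hqF
    exact hu.2 p q hpq (hpF.trans hqF.symm)
  have haF : a ∈ F := by simp [hF, hρ]
  exact antitone_unique F G w w' (hmem w hw) (hmem w' hw') hcard
    (hanti w hw) (hanti w' hw') haF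

lemma DyckPolyStrictNC_ne_zero {α : ℕ} {slope : ℚ} {t : ℕ} {x y : Fin t → ℚ × ℚ}
    (h : DyckPolyStrictNC α slope x y ≠ 0) :
    ∃ L : Fin t → LPath, FamFromTo x y L ∧ (∀ a, (L a).IsStrictDyck slope) ∧ ¬ Crossing L := by
  by_contra hn
  apply h
  rw [DyckPolyStrictNC]
  have hem : {L : Fin t → LPath |
      FamFromTo x y L ∧ (∀ a, (L a).IsStrictDyck slope) ∧ ¬ Crossing L} = ∅ := by
    ext L
    simp only [Set.mem_setOf_eq, Set.mem_empty_iff_false, iff_false]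
    intro hL
    exact hn ⟨L, hL⟩
  rw [hem]
  exact finsum_mem_empty

/-- For the Speh configuration with parameters `(h,t)`, `h ≥ t ≥ 1`,
`n = h·t`, `0 < s < n`: there is at most one permutation `w` with
`Dyck⁺_strict(ux^w, uy) ≠ 0`; moreover if such a `w` exists then the
invariants of the `ux_a` and the `uy_a` are equidistributed and `w` is the
permutation `w₀`. -/
theorem statement4 (h t : ℕ) (ht : 1 ≤ t) (hth : t ≤ h) (s : ℕ)
    (hs0 : 0 < s) (hsn : s < h * t) (α : ℕ) (hα : 1 ≤ α) :
    let n : ℕ := h * t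
    let slope : ℚ := (s : ℚ) / (n : ℚ)
    let ux : Fin t → ℚ × ℚ := spehUX slope h t
    let uy : Fin t → ℚ × ℚ := spehUY slope h t
    (∀ w w' : Equiv.Perm (Fin t),
        DyckPolyStrictNC α slope (fun a => ux (w a)) uy ≠ 0 →
        DyckPolyStrictNC α slope (fun a => ux (w' a)) uy ≠ 0 → w = w') ∧
    (∀ w : Equiv.Perm (Fin t),
        DyckPolyStrictNC α slope (fun a => ux (w a)) uy ≠ 0 →
        (∀ ρ : QmodZ, Nat.card {a : Fin t // invPt (ux a) = ρ}
            = Nat.card {a : Fin t // invPt (uy a) = ρ}) ∧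
        IsW0 ux uy w) := by
  intro n slope ux uy
  have key : ∀ w : Equiv.Perm (Fin t),
      DyckPolyStrictNC α slope (fun a => ux (w a)) uy ≠ 0 → IsW0 ux uy w := by
    intro w hw
    obtain ⟨Lf, hf1, hf2, hf3⟩ := DyckPolyStrictNC_ne_zero hw
    exact speh_main h t ht hth slope w Lf hf1 hf2 hf3
  constructor
  · intro w w' h1 h2
    exact isW0_unique (key w h1) (key w' h2)
  · intro w hw
    have h0 := key w hw
    refine ⟨fun ρ => ?_, h0⟩
    refine Nat.card_congr ⟨fun c => ⟨w.symm c.1, ?_⟩, fun c => ⟨w c.1, ?_⟩, ?_, ?_⟩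
    · rw [← h0.1 (w.symm c.1), Equiv.apply_symm_apply]
      exact c.2
    · rw [h0.1 c.1]
      exact c.2
    · intro c
      apply Subtype.ext
      simp
    · intro c
      apply Subtype.ext
      simp
end

section
/- Consider the Speh configuration with parameters (h,t), h ≥ t ≥ 1, n := h·t, an integer 0 < s < n, d := gcd(n,s), m := n/d, and fix a positive integer α. Assume m divides t or m divides h. Then the permutation w_0 is well defined, and there exists a non-crossing strict Dyck t-path from ux^{w_0} to uy (for each a one may take the path that first makes all its east steps and then all its north-east steps); in particular Dyck⁺_strict(ux^{w_0}, uy) ≠ 0 in A⁺. -/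
open scoped BigOperators

namespace Aux

/-! ### Arithmetic core -/

def core (m t e a : ℕ) : ℕ :=
  (a % m + e) % m + m * ((t - 1 - (a % m + e) % m) / m - a / m)

def del (m h : ℕ) : ℕ := (m - h % m) % m

def HH (m t e : ℕ) : Prop :=
  ∀ r, r < m → r < t → (r + e) % m < t ∧ (t - 1 - (r + e) % m) / m = (t - 1 - r) / m

lemma HH_of (m t e : ℕ) (hm1 : 1 ≤ m) (ht : 1 ≤ t) (hyp : m ∣ t ∨ e = 0) : HH m t e := by
  rcases hyp with ⟨u, hu⟩ | rfl
  · have hu1 : 1 ≤ u := by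
      rcases Nat.eq_zero_or_pos u with rfl | h
      · omega
      · exact h
    have key : ∀ r, r < m → (t - 1 - r) / m = u - 1 := by
      intro r hr
      have h2 : m * u = m * (u - 1) + m := by
        have h4 : u - 1 + 1 = u := by omega
        calc m * u = m * (u - 1 + 1) := by rw [h4]
        _ = m * (u - 1) + m := by ring
      have h3 : t - 1 - r = m * (u - 1) + (m - 1 - r) := by omega
      rw [h3, Nat.mul_add_div hm1, Nat.div_eq_of_lt (by omega), add_zero]
    intro r hr hrt
    have hr' : (r + e) % m < m := Nat.mod_lt _ hm1
    constructor
    · calc (r + e) % m < m := hr'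
      _ ≤ m * u := Nat.le_mul_of_pos_right m hu1
      _ = t := hu.symm
    · rw [key _ hr', key _ hr]
  · intro r hr hrt
    rw [Nat.add_zero, Nat.mod_eq_of_lt hr]
    exact ⟨hrt, rfl⟩

lemma div_le_K {m t a : ℕ} (hm1 : 1 ≤ m) (hat : a < t) : a / m ≤ (t - 1 - a % m) / m := by
  have h1 : a % m + a / m * m = a := Nat.mod_add_div' a m
  have h2 : a / m * m ≤ t - 1 - a % m := by omega
  exact (Nat.le_div_iff_mul_le hm1).2 h2

lemma core_lt {m t e a : ℕ} (hm1 : 1 ≤ m) (hh : HH m t e) (hat : a < t) :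
    core m t e a < t := by
  have hr : a % m < m := Nat.mod_lt _ hm1
  have hrt : a % m < t := lt_of_le_of_lt (Nat.mod_le _ _) hat
  obtain ⟨h1, _⟩ := hh (a % m) hr hrt
  have h3 : (t - 1 - (a % m + e) % m) / m * m ≤ t - 1 - (a % m + e) % m :=
    Nat.div_mul_le_self _ _
  have h4 : m * ((t - 1 - (a % m + e) % m) / m - a / m)
      ≤ m * ((t - 1 - (a % m + e) % m) / m) := Nat.mul_le_mul_left m (Nat.sub_le _ _)
  have h5 : m * ((t - 1 - (a % m + e) % m) / m) = (t - 1 - (a % m + e) % m) / m * m :=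
    Nat.mul_comm _ _
  unfold core
  omega

lemma core_mod {m t e a : ℕ} (hm1 : 1 ≤ m) : core m t e a % m = (a + e) % m := by
  unfold core
  rw [Nat.add_mul_mod_self_left, Nat.mod_eq_of_lt (Nat.mod_lt _ hm1)]
  exact Nat.mod_add_mod a m e

lemma core_div {m t e a : ℕ} (hm1 : 1 ≤ m) :
    core m t e a / m = (t - 1 - (a % m + e) % m) / m - a / m := by
  unfold core
  rw [Nat.add_mul_div_left _ _ hm1, Nat.div_eq_of_lt (Nat.mod_lt _ hm1), Nat.zero_add]

lemma core_core {m t e1 e2 a : ℕ} (hm1 : 1 ≤ m) (hh : HH m t e1)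
    (hee : (e1 + e2) % m = 0) (hat : a < t) : core m t e2 (core m t e1 a) = a := by
  set c := core m t e1 a with hc
  have hr : a % m < m := Nat.mod_lt _ hm1
  have hrt : a % m < t := lt_of_le_of_lt (Nat.mod_le _ _) hat
  obtain ⟨h1, h2⟩ := hh (a % m) hr hrt
  have hcm : c % m = (a + e1) % m := core_mod hm1
  have hcd : c / m = (t - 1 - a % m) / m - a / m := by
    rw [hc, core_div hm1, h2]
  have hr2 : (c % m + e2) % m = a % m := by
    rw [hcm, Nat.mod_add_mod, add_assoc, Nat.add_mod, hee, add_zero,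
      Nat.mod_mod_of_dvd _ dvd_rfl]
  have hK : a / m ≤ (t - 1 - a % m) / m := div_le_K hm1 hat
  unfold core
  rw [hr2, hcd]
  have h5 : (t - 1 - a % m) / m - ((t - 1 - a % m) / m - a / m) = a / m := by
    generalize (t - 1 - a % m) / m = X at hK ⊢
    generalize a / m = y at hK ⊢
    omega
  rw [h5]
  exact Nat.mod_add_div a m

lemma core_anti {m t e a b : ℕ} (hm1 : 1 ≤ m) (hh : HH m t e) (hab : a < b) (hbt : b < t)
    (hmod : a % m = b % m) : core m t e b < core m t e a := by
  have hdiv : a / m < b / m := by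
    have h1 : m * (a / m) + a % m = a := Nat.div_add_mod a m
    have h2 : m * (b / m) + b % m = b := Nat.div_add_mod b m
    have h3 : m * (a / m) < m * (b / m) := by omega
    exact Nat.lt_of_mul_lt_mul_left h3
  have hr : b % m < m := Nat.mod_lt _ hm1
  have hrt : b % m < t := lt_of_le_of_lt (Nat.mod_le _ _) hbt
  obtain ⟨_, h2⟩ := hh (b % m) hr hrt
  have hKb : b / m ≤ (t - 1 - b % m) / m := div_le_K hm1 hbt
  unfold core
  rw [hmod, h2]
  have hlt : (t - 1 - b % m) / m - b / m < (t - 1 - b % m) / m - a / m := by omega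
  exact Nat.add_lt_add_left (mul_lt_mul_of_pos_left hlt hm1) _

lemma del_add {m h : ℕ} (hm1 : 1 ≤ m) : (del m h + h % m) % m = 0 := by
  have hr : h % m < m := Nat.mod_lt _ hm1
  unfold del
  rcases Nat.eq_zero_or_pos (h % m) with h0 | h0
  · simp [h0]
  · rw [Nat.mod_eq_of_lt (show m - h % m < m by omega)]
    rw [show m - h % m + h % m = m by omega, Nat.mod_self]

/-! ### Rational / quotient lemmas -/

lemma ratMod_eq_iff {x y : ℚ} : ratMod x = ratMod y ↔ ∃ k : ℤ, x - y = (k : ℚ) := by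
  rw [ratMod, ratMod, QuotientAddGroup.mk'_eq_mk']
  constructor
  · rintro ⟨z, hz, hxz⟩
    obtain ⟨k, rfl⟩ := AddSubgroup.mem_zmultiples_iff.1 hz
    rw [zsmul_eq_mul, mul_one] at hxz
    exact ⟨-k, by push_cast; linarith⟩
  · rintro ⟨k, hk⟩
    refine ⟨(-k : ℤ) • (1:ℚ), AddSubgroup.zsmul_mem_zmultiples _ _, ?_⟩
    rw [zsmul_eq_mul, mul_one]
    push_cast
    linarith

lemma exists_int_slope_iff (n s : ℕ) (hn : 0 < n) (c : ℤ) :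
    (∃ k : ℤ, (s : ℚ) / (n : ℚ) * (c : ℚ) = (k : ℚ)) ↔
      ((n / Nat.gcd n s : ℕ) : ℤ) ∣ c := by
  set d := Nat.gcd n s with hd
  have hd0 : 0 < d := Nat.gcd_pos_of_pos_left _ hn
  set m := n / d with hm
  set s' := s / d with hs'
  have hnm : n = d * m := by
    rw [hm]; exact (Nat.mul_div_cancel' (Nat.gcd_dvd_left n s)).symm
  have hss : s = d * s' := by
    rw [hs']; exact (Nat.mul_div_cancel' (Nat.gcd_dvd_right n s)).symm
  have hcop : Nat.Coprime m s' := Nat.coprime_div_gcd_div_gcd hd0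
  have hn0 : (n : ℚ) ≠ 0 := by positivity
  have step1 : (∃ k : ℤ, (s : ℚ) / (n : ℚ) * (c : ℚ) = (k : ℚ)) ↔ (n : ℤ) ∣ (s : ℤ) * c := by
    constructor
    · rintro ⟨k, hk⟩
      have : (s : ℚ) * c = (k : ℚ) * n := by field_simp at hk; linarith [hk]
      have h2 : ((s : ℤ) * c : ℤ) = ((k * n : ℤ) : ℤ) := by
        exact_mod_cast this
      exact ⟨k, by linarith [h2]⟩
    · rintro ⟨k, hk⟩
      refine ⟨k, ?_⟩
      have : ((s : ℤ) * c : ℚ) = ((n : ℤ) * k : ℚ) := by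
        exact_mod_cast congrArg (fun z : ℤ => (z : ℚ)) hk
      push_cast at this
      field_simp
      linarith
  rw [step1]
  have hnz : (n : ℤ) = (d : ℤ) * m := by exact_mod_cast hnm
  have hsz : (s : ℤ) = (d : ℤ) * s' := by exact_mod_cast hss
  constructor
  · intro hdvd
    rw [hnz, hsz, mul_assoc] at hdvd
    have hd' : ((d : ℤ)) ≠ 0 := by exact_mod_cast hd0.ne'
    have h2 : (m : ℤ) ∣ (s' : ℤ) * c := (mul_dvd_mul_iff_left hd').1 hdvd
    have hcop' : IsCoprime (m : ℤ) (s' : ℤ) := by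
      rw [Int.isCoprime_iff_gcd_eq_one]
      exact_mod_cast hcop
    exact hcop'.dvd_of_dvd_mul_left h2
  · rintro ⟨c', rfl⟩
    exact ⟨(s' : ℤ) * c', by rw [hnz, hsz]; ring⟩

/-! ### Uniqueness of antitone bijections between finsets -/

lemma antitone_image_unique {β : Type} [LinearOrder β] [DecidableEq β] (S : Finset β) :
    ∀ (T : Finset β) (f g : β → β),
      (∀ a ∈ S, ∀ b ∈ S, a < b → f b < f a) →
      (∀ a ∈ S, ∀ b ∈ S, a < b → g b < g a) →
      S.image f = T → S.image g = T → ∀ a ∈ S, f a = g a := by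
  induction S using Finset.strongInductionOn with
  | _ S ih =>
    intro T f g hf hg hfT hgT a ha
    have hne : S.Nonempty := ⟨a, ha⟩
    set M := S.max' hne with hMdef
    have hM : M ∈ S := S.max'_mem hne
    have key : ∀ (f : β → β), (∀ a ∈ S, ∀ b ∈ S, a < b → f b < f a) → S.image f = T →
        ∀ y ∈ T, f M ≤ y := by
      intro f hf hfT y hy
      rw [← hfT] at hy
      obtain ⟨x, hx, rfl⟩ := Finset.mem_image.1 hy
      rcases eq_or_lt_of_le (S.le_max' x hx) with heq | hlt
      · rw [heq]
      · exact (hf x hx M hM hlt).le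
    have hfM : f M ∈ T := hfT ▸ Finset.mem_image_of_mem f hM
    have hgM : g M ∈ T := hgT ▸ Finset.mem_image_of_mem g hM
    have hMeq : f M = g M := le_antisymm (key f hf hfT _ hgM) (key g hg hgT _ hfM)
    rcases eq_or_ne a M with rfl | haM
    · exact hMeq
    · have him : ∀ (f : β → β), (∀ a ∈ S, ∀ b ∈ S, a < b → f b < f a) → S.image f = T →
          (S.erase M).image f = T.erase (f M) := by
        intro f hf hfT
        ext y
        simp only [Finset.mem_image, Finset.mem_erase]
        constructor
        · rintro ⟨x, ⟨hxM, hxS⟩, rfl⟩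
          have hlt : x < M := lt_of_le_of_ne (S.le_max' x hxS) hxM
          exact ⟨(hf x hxS M hM hlt).ne', hfT ▸ Finset.mem_image_of_mem f hxS⟩
        · rintro ⟨hyne, hyT⟩
          rw [← hfT] at hyT
          obtain ⟨x, hxS, rfl⟩ := Finset.mem_image.1 hyT
          exact ⟨x, ⟨fun hxM => hyne (by rw [hxM]), hxS⟩, rfl⟩
      have himg' : (S.erase M).image g = T.erase (f M) := by
        rw [hMeq]; exact him g hg hgT
      exact ih (S.erase M) (Finset.erase_ssubset hM) (T.erase (f M)) f g
        (fun x hx y hy => hf x (Finset.mem_of_mem_erase hx) y (Finset.mem_of_mem_erase hy))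
        (fun x hx y hy => hg x (Finset.mem_of_mem_erase hx) y (Finset.mem_of_mem_erase hy))
        (him f hf hfT) himg' a (Finset.mem_erase.2 ⟨haM, ha⟩)

/-! ### Paths made of east steps followed by north-east steps -/

def vf (v0 : ℚ × ℚ) (p : ℕ) (i : ℕ) : ℚ × ℚ := (v0.1 + i, v0.2 + ((i - p : ℕ) : ℚ))

def pq (v0 : ℚ × ℚ) (p q : ℕ) : LPath := ⟨v0, List.replicate p false ++ List.replicate q true⟩

lemma vf_zero (v0 : ℚ × ℚ) (p : ℕ) : vf v0 p 0 = v0 := by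
  simp [vf]

lemma vertices_pq (v0 : ℚ × ℚ) (p q : ℕ) :
    (pq v0 p q).vertices = (List.range (p + q + 1)).map (vf v0 p) := by
  induction p generalizing v0 with
  | zero =>
    induction q generalizing v0 with
    | zero =>
      show [v0] = _
      simp [List.range_succ, vf]
    | succ q ih =>
      have h1 : pq v0 0 (q+1) = ⟨v0, true :: List.replicate q true⟩ := by
        simp [pq, List.replicate_succ]
      rw [h1]
      show List.scanl (fun v b => v + LPath.stepVec b) v0 (true :: List.replicate q true) = _
      rw [List.scanl_cons]
      show (v0 :: (List.scanl _ (v0 + LPath.stepVec true) (List.replicate q true))) = _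
      have h2 : List.scanl (fun v b => v + LPath.stepVec b) (v0 + LPath.stepVec true)
          (List.replicate q true) = (List.range (0 + q + 1)).map (vf (v0 + LPath.stepVec true) 0) :=
        ih (v0 + LPath.stepVec true)
      rw [h2]
      conv_rhs => rw [List.range_succ_eq_map]
      rw [List.map_cons, List.map_map, vf_zero]
      congr 1
      apply List.map_congr_left
      intro i _
      simp only [Function.comp, vf, LPath.stepVec, Prod.fst_add, Prod.snd_add, Prod.mk.injEq]
      constructor
      · push_cast; ring
      · rw [Nat.sub_zero]; simp only [if_true]; push_cast; ring
  | succ p ih =>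
    have h1 : pq v0 (p+1) q = ⟨v0, false :: (List.replicate p false ++ List.replicate q true)⟩ := by
      simp [pq, List.replicate_succ]
    rw [h1]
    show List.scanl (fun v b => v + LPath.stepVec b) v0 (false :: (List.replicate p false ++ List.replicate q true)) = _
    rw [List.scanl_cons]
    show (v0 :: (List.scanl _ (v0 + LPath.stepVec false) _)) = _
    have h2 : List.scanl (fun v b => v + LPath.stepVec b) (v0 + LPath.stepVec false)
        (List.replicate p false ++ List.replicate q true)
        = (List.range (p + q + 1)).map (vf (v0 + LPath.stepVec false) p) := ih _
    rw [h2]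
    have hr : (p + 1) + q + 1 = (p + q + 1) + 1 := by ring
    rw [hr]
    conv_rhs => rw [List.range_succ_eq_map]
    rw [List.map_cons, List.map_map, vf_zero]
    congr 1
    apply List.map_congr_left
    intro i _
    simp only [Function.comp, vf, LPath.stepVec, Prod.fst_add, Prod.snd_add, Prod.mk.injEq]
    constructor
    · push_cast; ring
    · have : i + 1 - (p + 1) = i - p := by omega
      rw [this]
      simp

lemma endpt_pq (v0 : ℚ × ℚ) (p q : ℕ) :
    (pq v0 p q).endpt = (v0.1 + ((p + q : ℕ) : ℚ), v0.2 + (q : ℚ)) := by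
  have key : ∀ (l : List Bool) (v : ℚ × ℚ),
      l.foldl (fun v b => v + LPath.stepVec b) v
        = (v.1 + (l.length : ℚ), v.2 + ((l.count true : ℕ) : ℚ)) := by
    intro l
    induction l with
    | nil => intro v; simp
    | cons b l ih =>
      intro v
      rw [List.foldl_cons, ih]
      cases b <;> apply Prod.ext <;>
        simp [LPath.stepVec, List.count_cons] <;> push_cast <;> ring
  show _ = _
  rw [LPath.endpt, key]
  simp [pq, List.count_replicate]

lemma endpt_fst (L : LPath) : L.endpt.1 = L.start.1 + L.steps.length := by
  have key : ∀ (l : List Bool) (v : ℚ × ℚ),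
      (l.foldl (fun v b => v + LPath.stepVec b) v).1 = v.1 + l.length := by
    intro l
    induction l with
    | nil => intro v; simp
    | cons b l ih =>
      intro v
      rw [List.foldl_cons, ih]
      simp [LPath.stepVec]
      push_cast
      ring
  exact key L.steps L.start

lemma mem_vertices_pq {v0 : ℚ × ℚ} {p q : ℕ} {v : ℚ × ℚ} :
    v ∈ (pq v0 p q).vertices ↔ ∃ i, i ≤ p + q ∧ v = vf v0 p i := by
  rw [vertices_pq, List.mem_map]
  constructor
  · rintro ⟨i, hi, rfl⟩
    exact ⟨i, Nat.lt_succ_iff.1 (List.mem_range.1 hi), rfl⟩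
  · rintro ⟨i, hi, rfl⟩
    exact ⟨i, List.mem_range.2 (Nat.lt_succ_iff.2 hi), rfl⟩

lemma interior_mem {v0 : ℚ × ℚ} {p q : ℕ} (hpq : 1 ≤ p + q) {v : ℚ × ℚ}
    (hv : v ∈ ((pq v0 p q).vertices.drop 1).dropLast) :
    ∃ i, 1 ≤ i ∧ i ≤ p + q - 1 ∧ v = vf v0 p i := by
  rw [vertices_pq] at hv
  have h1 : ((List.range (p + q + 1)).map (vf v0 p)).drop 1
      = (List.range (p + q)).map (vf v0 p ∘ Nat.succ) := by
    rw [List.range_succ_eq_map, List.map_cons, List.drop_one, List.tail_cons, List.map_map]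
  rw [h1] at hv
  obtain ⟨N, hN⟩ : ∃ N, p + q = N + 1 := ⟨p + q - 1, by omega⟩
  rw [hN, List.range_succ, List.map_append] at hv
  simp only [List.map_cons, List.map_nil] at hv
  rw [List.dropLast_concat] at hv
  obtain ⟨i, hi, rfl⟩ := List.mem_map.1 hv
  exact ⟨i + 1, by omega, by have := List.mem_range.1 hi; omega, rfl⟩

lemma cast_sub_max (i p : ℕ) : ((i - p : ℕ) : ℚ) = max 0 ((i : ℚ) - p) := by
  rcases le_or_gt i p with h | h
  · rw [Nat.sub_eq_zero_of_le h]
    have : (i : ℚ) - p ≤ 0 := by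
      have := (Nat.cast_le (α := ℚ)).2 h
      linarith
    simp [max_eq_left this]
  · rw [Nat.cast_sub h.le]
    have : (0 : ℚ) ≤ (i : ℚ) - p := by
      have := (Nat.cast_le (α := ℚ)).2 h.le
      linarith
    rw [max_eq_right this]

end Aux
/-- For the Speh configuration with parameters `(h,t)`, `h ≥ t ≥ 1`,
`n = h·t`, `0 < s < n`, `m = n / gcd(n,s)`, if `m ∣ t` or `m ∣ h` then the
permutation `w₀` is well defined (exists and is unique), and there is a
non-crossing strict Dyck `t`-path from `ux^{w₀}` to `uy` in which each member
path first makes all its east steps and then all its north-east steps; in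
particular `Dyck⁺_strict(ux^{w₀}, uy) ≠ 0`. -/
theorem statement5 (h t : ℕ) (ht : 1 ≤ t) (hth : t ≤ h) (s : ℕ)
    (hs0 : 0 < s) (hsn : s < h * t) (α : ℕ) (hα : 1 ≤ α)
    (hm : (h * t) / Nat.gcd (h * t) s ∣ t ∨ (h * t) / Nat.gcd (h * t) s ∣ h) :
    let n : ℕ := h * t
    let slope : ℚ := (s : ℚ) / (n : ℚ)
    let ux : Fin t → ℚ × ℚ := spehUX slope h t
    let uy : Fin t → ℚ × ℚ := spehUY slope h t
    (∃! w0 : Equiv.Perm (Fin t), IsW0 ux uy w0) ∧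
    ∀ w0 : Equiv.Perm (Fin t), IsW0 ux uy w0 →
      (∃ L : Fin t → LPath,
        FamFromTo (fun a => ux (w0 a)) uy L ∧
        (∀ a, (L a).IsStrictDyck slope) ∧
        ¬ Crossing L ∧
        ∀ a, ∃ p q : ℕ, (L a).steps = List.replicate p false ++ List.replicate q true) ∧
      DyckPolyStrictNC α slope (fun a => ux (w0 a)) uy ≠ 0 := by
  intro n slope ux uy
  -- basic numerology
  have hn0 : 0 < n := Nat.mul_pos (by omega) ht
  set mm : ℕ := n / Nat.gcd n s with hmmdef
  have hm' : mm ∣ t ∨ mm ∣ h := hm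
  have hgcd0 : 0 < Nat.gcd n s := Nat.gcd_pos_of_pos_left _ hn0
  have hmm1 : 1 ≤ mm := Nat.div_pos (Nat.le_of_dvd hn0 (Nat.gcd_dvd_left n s)) hgcd0
  have hslope0 : 0 < slope := by
    have h1 : (0:ℚ) < (s:ℚ) := by exact_mod_cast hs0
    have h2 : (0:ℚ) < (n:ℚ) := by exact_mod_cast hn0
    exact div_pos h1 h2
  have hslope1 : slope < 1 := by
    have h1 : (s:ℚ) < (n:ℚ) := by exact_mod_cast hsn
    have h2 : (0:ℚ) < (n:ℚ) := by exact_mod_cast hn0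
    rw [div_lt_one h2]
    exact h1
  have hchar : ∀ c : ℤ, (∃ k : ℤ, slope * (c:ℚ) = (k:ℚ)) ↔ (mm:ℤ) ∣ c := fun c =>
    Aux.exists_int_slope_iff n s hn0 c
  -- the coordinates
  set X : Fin t → ℚ := fun c => ((t:ℚ) - h)/2 - (c.val : ℚ) with hXdef
  set Y : Fin t → ℚ := fun a => ((t:ℚ) + h)/2 - (a.val : ℚ) with hYdef
  have hux : ∀ c, ux c = (X c, slope * X c) := fun c => rfl
  have huy : ∀ a, uy a = (Y a, slope * Y a) := fun a => rfl
  -- invariant characterisations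
  have hXY : ∀ (c a : Fin t), (invPt (ux c) = invPt (uy a))
      ↔ (mm:ℤ) ∣ ((a.val:ℤ) - (c.val:ℤ) - (h:ℤ)) := by
    intro c a
    rw [hux c, huy a]
    show ratMod (slope * X c) = ratMod (slope * Y a) ↔ _
    rw [Aux.ratMod_eq_iff, ← hchar]
    have e : slope * X c - slope * Y a
        = slope * ((((a.val:ℤ) - (c.val:ℤ) - (h:ℤ)) : ℤ) : ℚ) := by
      rw [hXdef, hYdef]
      push_cast
      ring
    rw [e]
  have hYY : ∀ (a b : Fin t), (invPt (uy a) = invPt (uy b))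
      ↔ (mm:ℤ) ∣ ((b.val:ℤ) - (a.val:ℤ)) := by
    intro a b
    rw [huy a, huy b]
    show ratMod (slope * Y a) = ratMod (slope * Y b) ↔ _
    rw [Aux.ratMod_eq_iff, ← hchar]
    have e : slope * Y a - slope * Y b = slope * ((((b.val:ℤ) - (a.val:ℤ)) : ℤ) : ℚ) := by
      rw [hYdef]
      push_cast
      ring
    rw [e]
  -- the canonical permutation W
  have hδ : Aux.HH mm t (Aux.del mm h) := by
    apply Aux.HH_of mm t _ hmm1 ht
    rcases hm' with hmt | hmh
    · exact Or.inl hmt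
    · refine Or.inr ?_
      have h0 : h % mm = 0 := Nat.mod_eq_zero_of_dvd hmh
      rw [Aux.del, h0, Nat.sub_zero, Nat.mod_self]
  have hδ' : Aux.HH mm t (h % mm) := by
    apply Aux.HH_of mm t _ hmm1 ht
    rcases hm' with hmt | hmh
    · exact Or.inl hmt
    · exact Or.inr (Nat.mod_eq_zero_of_dvd hmh)
  have hee : (Aux.del mm h + h % mm) % mm = 0 := Aux.del_add hmm1
  have hee' : (h % mm + Aux.del mm h) % mm = 0 := by rw [add_comm]; exact hee
  set W : Equiv.Perm (Fin t) :=
    { toFun := fun a => ⟨Aux.core mm t (Aux.del mm h) a.val, Aux.core_lt hmm1 hδ a.2⟩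
      invFun := fun a => ⟨Aux.core mm t (h % mm) a.val, Aux.core_lt hmm1 hδ' a.2⟩
      left_inv := fun a => Fin.ext (Aux.core_core hmm1 hδ hee a.2)
      right_inv := fun a => Fin.ext (Aux.core_core hmm1 hδ' hee' a.2) } with hWdef
  have hWval : ∀ a : Fin t, (W a).val = Aux.core mm t (Aux.del mm h) a.val := fun a => rfl
  have hdelh : (mm:ℤ) ∣ ((Aux.del mm h : ℤ) + (h:ℤ)) := by
    have hdl : Aux.del mm h % mm = Aux.del mm h :=
      Nat.mod_eq_of_lt (by unfold Aux.del; exact Nat.mod_lt _ hmm1)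
    have h2 : (Aux.del mm h + h) % mm = 0 := by rw [Nat.add_mod, hdl, hee]
    have h3 : mm ∣ Aux.del mm h + h := Nat.dvd_of_mod_eq_zero h2
    exact_mod_cast Int.natCast_dvd_natCast.2 h3
  have hWmatch : ∀ a : Fin t, invPt (ux (W a)) = invPt (uy a) := by
    intro a
    rw [hXY]
    have h1 : (W a).val ≡ a.val + Aux.del mm h [MOD mm] := by
      show (W a).val % mm = (a.val + Aux.del mm h) % mm
      rw [hWval]
      exact Aux.core_mod hmm1
    have h2 := (Nat.modEq_iff_dvd).1 h1
    push_cast at h2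
    have e : (a.val:ℤ) - ((W a).val:ℤ) - (h:ℤ)
        = (((a.val:ℤ) + (Aux.del mm h : ℤ)) - ((W a).val:ℤ))
          - ((Aux.del mm h : ℤ) + (h:ℤ)) := by ring
    rw [e]
    exact dvd_sub h2 hdelh
  have hWanti : ∀ a b : Fin t, a < b → invPt (uy a) = invPt (uy b) → W b < W a := by
    intro a b hab hinv
    have hd := (hYY a b).1 hinv
    have hmod : a.val % mm = b.val % mm :=
      (Nat.modEq_iff_dvd (n := mm) (a := a.val) (b := b.val)).2 hd
    show (W b).val < (W a).val
    rw [hWval, hWval]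
    exact Aux.core_anti hmm1 hδ hab b.2 hmod
  have hWIs : IsW0 ux uy W := ⟨hWmatch, hWanti⟩
  -- uniqueness
  have huniq : ∀ w : Equiv.Perm (Fin t), IsW0 ux uy w → w = W := by
    intro w hw
    apply Equiv.ext
    intro a
    classical
    set S : Finset (Fin t) := Finset.univ.filter (fun b => invPt (uy b) = invPt (uy a)) with hSdef
    set T : Finset (Fin t) := Finset.univ.filter (fun c => invPt (ux c) = invPt (uy a)) with hTdef
    have hmemS : ∀ b : Fin t, b ∈ S ↔ invPt (uy b) = invPt (uy a) := by
      intro b; rw [hSdef]; simp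
    have hmemT : ∀ c : Fin t, c ∈ T ↔ invPt (ux c) = invPt (uy a) := by
      intro c; rw [hTdef]; simp
    have haS : a ∈ S := (hmemS a).2 rfl
    have himage : ∀ w' : Equiv.Perm (Fin t), IsW0 ux uy w' → S.image (fun x => w' x) = T := by
      intro w' hw'
      have hsub : S.image (fun x => w' x) ⊆ T := by
        intro c hc
        obtain ⟨b, hb, rfl⟩ := Finset.mem_image.1 hc
        rw [hmemT, hw'.1 b, ← hmemS]
        exact hb
      -- W hits everything in T
      have hWsub : S.image (fun x => W x) ⊆ T := by
        intro c hc
        obtain ⟨b, hb, rfl⟩ := Finset.mem_image.1 hc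
        rw [hmemT, hWmatch b, ← hmemS]
        exact hb
      have hTsub : T ⊆ S.image (fun x => W x) := by
        intro c hc
        refine Finset.mem_image.2 ⟨W.symm c, ?_, by simp⟩
        rw [hmemS]
        have := hWmatch (W.symm c)
        rw [Equiv.apply_symm_apply] at this
        rw [← this, ← hmemT]
        exact hc
      have hWim : S.image (fun x => W x) = T := le_antisymm hWsub hTsub
      have hcard : T.card = S.card := by
        rw [← hWim]
        exact Finset.card_image_of_injective S W.injective
      apply Finset.eq_of_subset_of_card_le hsub
      rw [hcard, Finset.card_image_of_injective S w'.injective]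
    have hanti : ∀ (w' : Equiv.Perm (Fin t)), IsW0 ux uy w' →
        ∀ x ∈ S, ∀ y ∈ S, x < y → w' y < w' x := by
      intro w' hw' x hx y hy hxy
      exact hw'.2 x y hxy (((hmemS x).1 hx).trans ((hmemS y).1 hy).symm)
    exact Aux.antitone_image_unique S T (fun x => w x) (fun x => W x)
      (hanti w hw) (hanti W hWIs) (himage w hw) (himage W hWIs) a haS
  refine ⟨⟨W, hWIs, huniq⟩, ?_⟩
  -- PART 2 --
  intro w hw
  obtain ⟨hmatch, hanti⟩ := hw
  -- step lengths
  set ell : Fin t → ℕ := fun a => h + (w a).val - a.val with helldef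
  have hale : ∀ a : Fin t, a.val + 1 ≤ h + (w a).val := by
    intro a
    have := a.2
    omega
  have hellcast : ∀ a, (ell a : ℚ) = (h:ℚ) + ((w a).val:ℚ) - (a.val:ℚ) := by
    intro a
    show ((h + (w a).val - a.val : ℕ) : ℚ) = _
    rw [Nat.cast_sub (by have := hale a; omega)]
    push_cast
    ring
  have hellpos : ∀ a, 1 ≤ ell a := by
    intro a
    have := hale a
    show 1 ≤ h + (w a).val - a.val
    omega
  -- the number of north-east steps
  have hqex : ∀ a, ∃ qa : ℕ, (qa:ℚ) = slope * (ell a : ℚ) := by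
    intro a
    have h1 := (hXY (w a) a).1 (hmatch a)
    have h2 : (mm:ℤ) ∣ ((ell a : ℕ) : ℤ) := by
      have e : ((ell a : ℕ) : ℤ) = -((a.val:ℤ) - ((w a).val:ℤ) - (h:ℤ)) := by
        have h3 := hale a
        show ((h + (w a).val - a.val : ℕ) : ℤ) = _
        omega
      rw [e]
      exact dvd_neg.2 h1
    obtain ⟨k, hk⟩ := (hchar ((ell a : ℕ) : ℤ)).2 h2
    have hk' : (k:ℚ) = slope * (ell a : ℚ) := by
      rw [← hk]
      norm_num
    have hk0 : (0:ℤ) ≤ k := by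
      have h4 : (0:ℚ) ≤ (k:ℚ) := by
        rw [hk']
        positivity
      exact_mod_cast h4
    refine ⟨k.toNat, ?_⟩
    rw [← hk']
    exact_mod_cast congrArg (fun z : ℤ => (z:ℚ)) (Int.toNat_of_nonneg hk0)
  choose qn hqn using hqex
  have hq1 : ∀ a, 1 ≤ qn a := by
    intro a
    rcases Nat.eq_zero_or_pos (qn a) with h0 | h0
    · exfalso
      have h1 : (0:ℚ) < slope * (ell a : ℚ) := by
        apply mul_pos hslope0
        have h2 : (1:ℚ) ≤ (ell a : ℚ) := by exact_mod_cast hellpos a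
        linarith
      rw [← hqn a, h0] at h1
      norm_num at h1
    · exact h0
  have hqlt : ∀ a, qn a < ell a := by
    intro a
    have h1 : (qn a : ℚ) < (ell a : ℚ) := by
      rw [hqn a]
      have he : (1:ℚ) ≤ (ell a : ℚ) := by exact_mod_cast hellpos a
      nlinarith [he, hslope1, hslope0]
    exact_mod_cast h1
  set pn : Fin t → ℕ := fun a => ell a - qn a with hpndef
  have hpq : ∀ a, pn a + qn a = ell a := by
    intro a
    have := hqlt a
    show ell a - qn a + qn a = ell a
    omega
  have hp1 : ∀ a, 1 ≤ pn a := by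
    intro a
    have h1 := hqlt a
    show 1 ≤ ell a - qn a
    omega
  have hsum : ∀ a, (pn a : ℚ) + (qn a : ℚ) = (ell a : ℚ) := by
    intro a
    exact_mod_cast congrArg (fun z : ℕ => (z:ℚ)) (hpq a)
  have hYX : ∀ a, Y a = X (w a) + (ell a : ℚ) := by
    intro a
    rw [hellcast a]
    simp only [hXdef, hYdef]
    ring
  -- the paths
  set L : Fin t → LPath := fun a => Aux.pq (ux (w a)) (pn a) (qn a) with hLdef
  have hLa : ∀ a, L a = Aux.pq (ux (w a)) (pn a) (qn a) := fun a => rfl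
  have hfam : FamFromTo (fun a => ux (w a)) uy L := by
    intro a
    refine ⟨rfl, ?_⟩
    rw [hLa a, Aux.endpt_pq, hux (w a), huy a]
    have e1 : ((pn a + qn a : ℕ):ℚ) = (ell a : ℚ) := by
      exact_mod_cast congrArg (fun z : ℕ => (z:ℚ)) (hpq a)
    apply Prod.ext
    · show X (w a) + ((pn a + qn a : ℕ):ℚ) = Y a
      rw [e1, hYX a]
    · show slope * X (w a) + (qn a : ℚ) = slope * Y a
      rw [hqn a, hYX a]
      ring
  have hqq : ∀ a, (qn a : ℚ) = slope * ((pn a:ℚ) + (qn a:ℚ)) := by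
    intro a
    rw [hsum a]
    exact hqn a
  have hv1 : ∀ (a : Fin t) (i : ℕ),
      (Aux.vf (ux (w a)) (pn a) i).1 = X (w a) + (i:ℚ) := by
    intro a i
    rw [Aux.vf, hux (w a)]
  have hv2 : ∀ (a : Fin t) (i : ℕ),
      (Aux.vf (ux (w a)) (pn a) i).2 = slope * X (w a) + ((i - pn a : ℕ):ℚ) := by
    intro a i
    rw [Aux.vf, hux (w a)]
  -- strict Dyck property
  have hdyck : ∀ a, (L a).IsStrictDyck slope := by
    intro a
    constructor
    · intro v hv
      rw [hLa a] at hv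
      obtain ⟨i, hi, rfl⟩ := Aux.mem_vertices_pq.1 hv
      rw [hv1 a i, hv2 a i, Aux.cast_sub_max]
      have hi' : (i:ℚ) ≤ (pn a:ℚ) + (qn a:ℚ) := by exact_mod_cast hi
      have key : max 0 ((i:ℚ) - (pn a:ℚ)) ≤ slope * (i:ℚ) := by
        apply max_le
        · positivity
        · nlinarith [hqq a, mul_nonneg (sub_nonneg.2 hslope1.le) (sub_nonneg.2 hi')]
      rw [mul_add]
      linarith [key]
    · intro v hv
      rw [hLa a] at hv
      obtain ⟨i, hi1, hi2, rfl⟩ := Aux.interior_mem (by have := hp1 a; omega) hv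
      rw [hv1 a i, hv2 a i, Aux.cast_sub_max]
      intro heq
      have hi' : (i:ℚ) < (pn a:ℚ) + (qn a:ℚ) := by
        have h5 : i < pn a + qn a := by
          have := hp1 a
          have := hq1 a
          omega
        exact_mod_cast h5
      have hi1' : (1:ℚ) ≤ (i:ℚ) := by exact_mod_cast hi1
      have key : max 0 ((i:ℚ) - (pn a:ℚ)) < slope * (i:ℚ) := by
        apply max_lt
        · nlinarith [hslope0, hi1']
        · nlinarith [hqq a, mul_pos (sub_pos.2 hslope1) (sub_pos.2 hi')]
      rw [mul_add] at heq
      linarith [key]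
  -- the corner identity and max formula
  have hCC : ∀ a, X (w a) + (pn a : ℚ) - slope * X (w a) = (1 - slope) * Y a := by
    intro a
    have hpcast : (pn a : ℚ) = (ell a:ℚ) - (qn a:ℚ) := by
      rw [← hsum a]
      ring
    rw [hpcast, hqn a, hYX a]
    ring
  have hmaxform : ∀ (a : Fin t) (i : ℕ),
      slope * X (w a) + ((i - pn a : ℕ):ℚ)
        = max (slope * X (w a)) ((X (w a) + (i:ℚ)) - (1 - slope) * Y a) := by
    intro a i
    rw [Aux.cast_sub_max]
    rw [show slope * X (w a) + max 0 ((i:ℚ) - (pn a:ℚ))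
        = max (slope * X (w a) + 0) (slope * X (w a) + ((i:ℚ) - (pn a:ℚ)))
        from (max_add_add_left _ _ _).symm]
    rw [← hCC a]
    congr 1
    · ring
    · ring
  -- membership structure of vertices
  have hV : ∀ (a : Fin t) (v : ℚ × ℚ), v ∈ (L a).vertices →
      ∃ i : ℕ, i ≤ pn a + qn a ∧ v.1 = X (w a) + (i:ℚ) ∧
        v.2 = slope * X (w a) + ((i - pn a : ℕ):ℚ) := by
    intro a v hv
    rw [hLa a] at hv
    obtain ⟨i, hi, rfl⟩ := Aux.mem_vertices_pq.1 hv
    exact ⟨i, hi, hv1 a i, hv2 a i⟩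
  -- non-crossing
  have hnocross : ¬ Crossing L := by
    rintro ⟨a, b, hab, v, hva, hvb⟩
    obtain ⟨i, hi, hvi1, hvi2⟩ := hV a v hva
    obtain ⟨j, hj, hvj1, hvj2⟩ := hV b v hvb
    have hdint : (mm:ℤ) ∣ (((w b).val:ℤ) - ((w a).val:ℤ)) := by
      rw [← hchar]
      refine ⟨((j - pn b : ℕ):ℤ) - ((i - pn a : ℕ):ℤ), ?_⟩
      have e : slope * (((((w b).val:ℤ) - ((w a).val:ℤ)) : ℤ):ℚ)
          = slope * X (w a) - slope * X (w b) := by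
        simp only [hXdef]
        push_cast
        ring
      rw [e]
      have h2 : slope * X (w a) + ((i - pn a:ℕ):ℚ) = slope * X (w b) + ((j - pn b:ℕ):ℚ) := by
        rw [← hvi2, ← hvj2]
      push_cast
      linarith [h2]
    have hclass : invPt (uy a) = invPt (uy b) := by
      rw [hYY]
      have d1 := (hXY (w a) a).1 (hmatch a)
      have d2 := (hXY (w b) b).1 (hmatch b)
      have e : (b.val:ℤ) - (a.val:ℤ)
          = (((b.val:ℤ) - ((w b).val:ℤ) - (h:ℤ)) + (((w b).val:ℤ) - ((w a).val:ℤ)))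
            - ((a.val:ℤ) - ((w a).val:ℤ) - (h:ℤ)) := by ring
      rw [e]
      exact dvd_sub (dvd_add d2 hdint) d1
    have hkey : ∀ (a b : Fin t), a < b → invPt (uy a) = invPt (uy b) →
        ∀ (i j : ℕ), X (w a) + (i:ℚ) = X (w b) + (j:ℚ) →
        slope * X (w a) + ((i - pn a:ℕ):ℚ) < slope * X (w b) + ((j - pn b:ℕ):ℚ) := by
      intro a b hab hcl i j hfst
      have hwba : w b < w a := hanti a b hab hcl
      have hXlt : X (w a) < X (w b) := by
        simp only [hXdef]
        have h5 : ((w b).val:ℚ) < ((w a).val:ℚ) := by exact_mod_cast hwba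
        linarith
      have hYlt : Y b < Y a := by
        simp only [hYdef]
        have h5 : (a.val:ℚ) < (b.val:ℚ) := by exact_mod_cast hab
        linarith
      rw [hmaxform a i, hmaxform b j, hfst]
      apply max_lt_max
      · exact mul_lt_mul_of_pos_left hXlt hslope0
      · have h5 : (1 - slope) * Y b < (1 - slope) * Y a :=
          mul_lt_mul_of_pos_left hYlt (by linarith)
        linarith
    rcases lt_trichotomy a b with hlt | heq | hgt
    · have h6 := hkey a b hlt hclass i j (by rw [← hvi1, ← hvj1])
      rw [← hvi2, ← hvj2] at h6
      exact lt_irrefl _ h6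
    · exact hab heq
    · have h6 := hkey b a hgt hclass.symm j i (by rw [← hvi1, ← hvj1])
      rw [← hvi2, ← hvj2] at h6
      exact lt_irrefl _ h6
  have hshape : ∀ a, ∃ p q : ℕ, (L a).steps = List.replicate p false ++ List.replicate q true :=
    fun a => ⟨pn a, qn a, rfl⟩
  refine ⟨⟨L, hfam, hdyck, hnocross, hshape⟩, ?_⟩
  -- non-vanishing
  classical
  set SS : Set (Fin t → LPath) := {L' : Fin t → LPath |
      FamFromTo (fun a => ux (w a)) uy L' ∧ (∀ a, (L' a).IsStrictDyck slope) ∧ ¬ Crossing L'}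
      with hSSdef
  have hLSS : L ∈ SS := ⟨hfam, hdyck, hnocross⟩
  have hlen : ∀ L' ∈ SS, ∀ a : Fin t, (L' a).steps.length ≤ h + t := by
    intro L' hL' a
    obtain ⟨hfam', -, -⟩ := hL'
    have h3 : (L' a).endpt.1 = (L' a).start.1 + (L' a).steps.length := Aux.endpt_fst _
    rw [(hfam' a).2, (hfam' a).1] at h3
    dsimp only at h3
    rw [hux (w a), huy a] at h3
    dsimp only at h3
    have hb1 : ((w a).val:ℚ) < (t:ℚ) := by exact_mod_cast (w a).2
    have hb2 : (0:ℚ) ≤ (a.val:ℚ) := Nat.cast_nonneg _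
    have h4 : ((L' a).steps.length : ℚ) ≤ (h:ℚ) + (t:ℚ) := by
      simp only [hXdef, hYdef] at h3
      linarith [h3]
    exact_mod_cast h4
  have hinj : Set.InjOn (fun L' : Fin t → LPath => fun a => (L' a).steps) SS := by
    intro L1 h1 L2 h2 heq
    funext a
    have e1 : (L1 a).start = (L2 a).start := by
      rw [(h1.1 a).1, (h2.1 a).1]
    have e2 : (L1 a).steps = (L2 a).steps := congrFun heq a
    calc L1 a = ⟨(L1 a).start, (L1 a).steps⟩ := rfl
    _ = ⟨(L2 a).start, (L2 a).steps⟩ := by rw [e1, e2]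
    _ = L2 a := rfl
  have himfin : ((fun L' : Fin t → LPath => fun a => (L' a).steps) '' SS).Finite := by
    apply Set.Finite.subset (Set.Finite.pi (fun a : Fin t => List.finite_length_le Bool (h+t)))
    rintro g ⟨L', hL', rfl⟩
    intro a _
    exact hlen L' hL' a
  have hSSfin : SS.Finite := Set.Finite.of_finite_image himfin hinj
  intro hzero
  have hzero' : (∑ᶠ L' ∈ SS, famWeight α L') = 0 := hzero
  rw [finsum_mem_eq_finite_toFinset_sum _ hSSfin] at hzero'
  set φ : AddMonoidAlgebra ℂ ℚ →ₐ[ℂ] ℂ := (AddMonoidAlgebra.lift ℂ ℂ ℚ) 1 with hφdef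
  have hφw : ∀ L' : Fin t → LPath, φ (famWeight α L') = 1 := by
    intro L'
    show φ (∏ a, (L' a).weight α) = 1
    rw [map_prod]
    apply Finset.prod_eq_one
    intro a _
    show φ (qpow _) = 1
    rw [qpow, hφdef]
    simp [AddMonoidAlgebra.lift_single]
  have hcard := congrArg φ hzero'
  rw [map_sum, map_zero] at hcard
  simp only [hφw] at hcard
  rw [Finset.sum_const, nsmul_eq_mul, mul_one] at hcard
  have hmem := hSSfin.mem_toFinset.2 hLSS
  have hc0 : hSSfin.toFinset.card ≠ 0 := Finset.card_ne_zero_of_mem hmem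
  exact hc0 (by exact_mod_cast hcard)
end

section
/- Fix integers n ≥ 1 and 0 < s < n and let ℓ be the line of slope s/n through the origin in ℚ². Let L be a path from P1 to Q1 and L′ a path from P2 to Q2, where P1, Q1, P2, Q2 all lie on ℓ, every point of L and of L′ lies on or below ℓ, the first coordinates satisfy P1 < P2 ≤ Q1 < Q2, the difference of the first coordinates of P2 and P1 is an integer, and the invariants satisfy ρ(P1) = ρ(P2) in ℚ/ℤ. Then L and L′ have a common vertex: some point of ℚ² occurs in the defining sequence of points of L and also in the defining sequence of points of L′. -/
open scoped BigOperators

namespace LPath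

/-- The `i`-th vertex of a path. -/
def pos (L : LPath) (i : ℕ) : ℚ × ℚ :=
  (L.steps.take i).foldl (fun v b => v + stepVec b) L.start

lemma pos_zero (L : LPath) : L.pos 0 = L.start := rfl

lemma pos_length (L : LPath) : L.pos L.steps.length = L.endpt := by
  unfold pos endpt; rw [List.take_length]

lemma pos_succ (L : LPath) {i : ℕ} (h : i < L.steps.length) :
    L.pos (i+1) = L.pos i + stepVec (L.steps.get ⟨i, h⟩) := by
  unfold pos
  rw [List.take_succ, List.foldl_append]
  simp [List.getElem?_eq_getElem h]

lemma foldl_take_mem_scanl {α β : Type*} (f : β → α → β) :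
    ∀ (l : List α) (b : β) (i : ℕ), i ≤ l.length → (l.take i).foldl f b ∈ l.scanl f b := by
  intro l
  induction l with
  | nil =>
    intro b i h
    have : i = 0 := Nat.le_zero.mp h
    subst this
    simp [List.scanl]
  | cons a l ih =>
    intro b i h
    cases i with
    | zero => simp [List.scanl]
    | succ j =>
      simp only [List.scanl_cons, List.take, List.foldl_cons, List.mem_cons]
      exact Or.inr (ih (f b a) j (by simpa using h))

lemma pos_mem (L : LPath) {i : ℕ} (h : i ≤ L.steps.length) : L.pos i ∈ L.vertices :=
  foldl_take_mem_scanl _ _ _ _ h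

lemma pos_fst (L : LPath) : ∀ i : ℕ, i ≤ L.steps.length → (L.pos i).1 = L.start.1 + i := by
  intro i
  induction i with
  | zero => simp [pos_zero]
  | succ j ih =>
    intro h
    rw [L.pos_succ (by omega)]
    have := ih (by omega)
    simp [stepVec, Prod.fst_add, this]
    ring

lemma pos_snd_succ (L : LPath) {i : ℕ} (h : i < L.steps.length) :
    ∃ c : ℤ, (c = 0 ∨ c = 1) ∧ (L.pos (i+1)).2 = (L.pos i).2 + c := by
  rw [L.pos_succ h]
  cases hb : L.steps.get ⟨i, h⟩ with
  | false => exact ⟨0, Or.inl rfl, by simp [stepVec, hb]⟩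
  | true => exact ⟨1, Or.inr rfl, by simp [stepVec, hb]⟩

lemma pos_snd_int (L : LPath) : ∀ i : ℕ, i ≤ L.steps.length →
    ∃ z : ℤ, (L.pos i).2 = L.start.2 + z := by
  intro i
  induction i with
  | zero => exact fun _ => ⟨0, by simp [pos_zero]⟩
  | succ j ih =>
    intro h
    obtain ⟨z, hz⟩ := ih (by omega)
    obtain ⟨c, _, hc⟩ := L.pos_snd_succ (i := j) (by omega)
    exact ⟨z + c, by rw [hc, hz]; push_cast; ring⟩

end LPath

lemma discreteIVT (G : ℕ → ℤ) :
    ∀ N : ℕ, G 0 ≤ 0 → 0 ≤ G N → (∀ j, j < N → G (j+1) ≤ G j + 1) → ∃ j ≤ N, G j = 0 := by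
  intro N
  induction N with
  | zero => intro h1 h2 _; exact ⟨0, le_refl _, le_antisymm h1 h2⟩
  | succ M ih =>
    intro h1 h2 hstep
    rcases le_or_gt 0 (G M) with h | h
    · obtain ⟨j, hj, hj0⟩ := ih h1 h (fun j hj => hstep j (by omega))
      exact ⟨j, by omega, hj0⟩
    · have := hstep M (by omega)
      exact ⟨M + 1, le_refl _, by omega⟩

/-- Two Dyck paths (w.r.t. the line `ℓ` of slope `s/n`, `0 < s < n`) whose
endpoints lie on `ℓ` and interleave as `P1 < P2 ≤ Q1 < Q2`, such that the
horizontal distance from `P1` to `P2` is integral and `ρ(P1) = ρ(P2)` in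
`ℚ/ℤ`, must share a vertex. -/
theorem statement9 (n s : ℕ) (hn : 1 ≤ n) (hs0 : 0 < s) (hsn : s < n)
    (L L' : LPath)
    (hP1 : L.start = linePt ((s : ℚ) / (n : ℚ)) L.start.1)
    (hQ1 : L.endpt = linePt ((s : ℚ) / (n : ℚ)) L.endpt.1)
    (hP2 : L'.start = linePt ((s : ℚ) / (n : ℚ)) L'.start.1)
    (hQ2 : L'.endpt = linePt ((s : ℚ) / (n : ℚ)) L'.endpt.1)
    (hbelow : L.IsBelow ((s : ℚ) / (n : ℚ)))
    (hbelow' : L'.IsBelow ((s : ℚ) / (n : ℚ)))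
    (hord1 : L.start.1 < L'.start.1)
    (hord2 : L'.start.1 ≤ L.endpt.1)
    (hord3 : L.endpt.1 < L'.endpt.1)
    (hint : ∃ k : ℤ, L'.start.1 - L.start.1 = (k : ℚ))
    (hinv : invPt L.start = invPt L'.start) :
    ∃ v : ℚ × ℚ, v ∈ L.vertices ∧ v ∈ L'.vertices := by
  set sl : ℚ := (s : ℚ) / (n : ℚ) with hsl
  set m := L.steps.length with hm
  set m' := L'.steps.length with hm'
  have hmE : L.endpt.1 = L.start.1 + m := by
    rw [← L.pos_length]; exact L.pos_fst m le_rfl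
  have hmE' : L'.endpt.1 = L'.start.1 + m' := by
    rw [← L'.pos_length]; exact L'.pos_fst m' le_rfl
  obtain ⟨k, hk⟩ := hint
  have hk0 : 0 < k := by
    have h0 : (0:ℚ) < (k:ℚ) := by rw [← hk]; linarith
    exact_mod_cast h0
  have hkm : k ≤ (m:ℤ) := by
    have h0 : (k:ℚ) ≤ (m:ℚ) := by rw [← hk]; linarith
    exact_mod_cast h0
  set K := k.toNat with hKdef
  have hKk : (K : ℚ) = (k : ℚ) := by
    have : (K : ℤ) = k := Int.toNat_of_nonneg (le_of_lt hk0)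
    exact_mod_cast this
  have hKm : K ≤ m := by omega
  set N := m - K with hNdef
  have hKN : K + N = m := by omega
  have hmlt : m < K + m' := by
    have h0 : (m:ℚ) < (K:ℚ) + (m':ℚ) := by rw [hKk]; linarith
    exact_mod_cast h0
  have hNm' : N ≤ m' := by omega
  -- the invariant condition: second coordinates differ by an integer
  have hd : ∃ d : ℤ, L'.start.2 = L.start.2 + d := by
    unfold invPt ratMod at hinv
    rw [QuotientAddGroup.mk'_eq_mk'] at hinv
    obtain ⟨z, hz, hz2⟩ := hinv
    rw [AddSubgroup.mem_zmultiples_iff] at hz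
    obtain ⟨d, hd⟩ := hz
    exact ⟨d, by rw [← hz2, ← hd]; simp [zsmul_eq_mul]⟩
  obtain ⟨d, hd⟩ := hd
  -- the height-difference function
  set g : ℕ → ℚ := fun j => (L.pos (K + j)).2 - (L'.pos j).2 with hgdef
  have hZ : ∀ j, j ≤ N → ∃ z : ℤ, g j = (z : ℚ) := by
    intro j hj
    obtain ⟨z1, hz1⟩ := L.pos_snd_int (K + j) (by omega)
    obtain ⟨z2, hz2⟩ := L'.pos_snd_int j (by omega)
    exact ⟨z1 - z2 - d, by simp only [hgdef, hz1, hz2, hd]; push_cast; ring⟩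
  set G : ℕ → ℤ := fun j => if h : j ≤ N then (hZ j h).choose else 0 with hGdef
  have hG : ∀ j, (h : j ≤ N) → (G j : ℚ) = g j := by
    intro j h
    simp only [hGdef, dif_pos h]
    exact ((hZ j h).choose_spec).symm
  have hstart2 : L'.start.2 = sl * L'.start.1 := by
    have := congrArg Prod.snd hP2; simpa [linePt] using this
  have hend2 : L.endpt.2 = sl * L.endpt.1 := by
    have := congrArg Prod.snd hQ1; simpa [linePt] using this
  -- fst coordinates on the common grid agree
  have hfst : ∀ j, j ≤ N → (L.pos (K + j)).1 = (L'.pos j).1 := by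
    intro j hj
    rw [L.pos_fst (K + j) (by omega), L'.pos_fst j (by omega)]
    have : L'.start.1 = L.start.1 + (k:ℚ) := by linarith
    rw [this, ← hKk]; push_cast; ring
  -- g 0 ≤ 0
  have hg0 : g 0 ≤ 0 := by
    have hb := hbelow _ (L.pos_mem (i := K + 0) (by omega))
    have hf := hfst 0 (by omega)
    have hpf : (L'.pos 0).1 = L'.start.1 := by rw [L'.pos_zero]
    simp only [hgdef]
    rw [L'.pos_zero]
    rw [hpf] at hf
    rw [hstart2, ← hf]
    linarith
  -- g N ≥ 0
  have hgN : 0 ≤ g N := by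
    have hb := hbelow' _ (L'.pos_mem (i := N) hNm')
    have hf := hfst N le_rfl
    have hKNe : L.pos (K + N) = L.endpt := by rw [hKN, L.pos_length]
    simp only [hgdef]
    rw [hKNe]
    rw [hKNe] at hf
    rw [hend2, hf]
    linarith
  have hG0 : G 0 ≤ 0 := by
    have := hG 0 (by omega); rw [← this] at hg0; exact_mod_cast hg0
  have hGN : 0 ≤ G N := by
    have := hG N le_rfl; rw [← this] at hgN; exact_mod_cast hgN
  have hGstep : ∀ j, j < N → G (j+1) ≤ G j + 1 := by
    intro j hj
    obtain ⟨c1, hc1cases, hc1⟩ := L.pos_snd_succ (i := K + j) (by omega)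
    obtain ⟨c2, hc2cases, hc2⟩ := L'.pos_snd_succ (i := j) (by omega)
    have hstep : g (j+1) ≤ g j + 1 := by
      have e1 : K + (j + 1) = (K + j) + 1 := by omega
      simp only [hgdef, e1, hc1, hc2]
      have h1 : (c1:ℚ) ≤ 1 := by rcases hc1cases with h|h <;> simp [h]
      have h2 : (0:ℚ) ≤ (c2:ℚ) := by rcases hc2cases with h|h <;> simp [h]
      linarith
    have e1 := hG (j+1) (by omega)
    have e2 := hG j (by omega)
    have : (G (j+1) : ℚ) ≤ (G j : ℚ) + 1 := by rw [e1, e2]; exact hstep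
    exact_mod_cast this
  obtain ⟨j, hjN, hj0⟩ := discreteIVT G N hG0 hGN hGstep
  refine ⟨L.pos (K + j), L.pos_mem (by omega), ?_⟩
  have hsnd : (L.pos (K + j)).2 = (L'.pos j).2 := by
    have := hG j hjN
    rw [hj0] at this
    simp only [hgdef] at this
    push_cast at this
    linarith
  have : L.pos (K + j) = L'.pos j := Prod.ext (hfst j hjN) hsnd
  rw [this]
  exact L'.pos_mem (by omega)
end

section
/- Let h ≤ t be positive integers, set n := h·t, and let w be any permutation of {1,…,h}. Define n_a := t − a + w(a) and u_a := (t−h)/2 − (w(a) − 1) for a = 1,…,h. Then Σ_{a=1}^h [ (1−n)/2 + Σ_{b=1}^{a−1} n_b − u_a ] · n_a ≤ 0. -/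
theorem tri_aux_statement12 (m : ℕ) (g : Fin m → ℚ) :
    ∑ a : Fin m, (∑ b : Fin m, if b.val < a.val then g b else 0) * g a
      = ((∑ a, g a)^2 - ∑ a, (g a)^2) / 2 := by
  have h1 : (∑ a, g a)^2 = ∑ a : Fin m, ∑ b : Fin m, g a * g b := by
    rw [sq, Finset.sum_mul_sum]
  have h2 : ∀ a b : Fin m, g a * g b
      = (if b.val < a.val then g b * g a else 0)
        + (if a.val < b.val then g a * g b else 0)
        + (if a = b then g a * g b else 0) := by
    intro a b
    rcases lt_trichotomy a.val b.val with hlt | heq | hgt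
    · simp [hlt, Nat.lt_asymm hlt, Fin.ne_of_val_ne (Nat.ne_of_lt hlt), mul_comm]
    · have : a = b := Fin.ext heq
      simp [this]
    · simp [hgt, Nat.lt_asymm hgt, Fin.ne_of_val_ne (Nat.ne_of_lt hgt).symm, mul_comm]
  have h3 : (∑ a, g a)^2
      = (∑ a : Fin m, ∑ b : Fin m, if b.val < a.val then g b * g a else 0)
        + (∑ a : Fin m, ∑ b : Fin m, if a.val < b.val then g a * g b else 0)
        + ∑ a : Fin m, ∑ b : Fin m, if a = b then g a * g b else 0 := by
    rw [h1]
    rw [← Finset.sum_add_distrib, ← Finset.sum_add_distrib]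
    refine Finset.sum_congr rfl fun a _ => ?_
    rw [← Finset.sum_add_distrib, ← Finset.sum_add_distrib]
    exact Finset.sum_congr rfl fun b _ => h2 a b
  have h4 : (∑ a : Fin m, ∑ b : Fin m, if a.val < b.val then g a * g b else 0)
      = ∑ a : Fin m, ∑ b : Fin m, if b.val < a.val then g b * g a else 0 := by
    rw [Finset.sum_comm]
  have h5 : (∑ a : Fin m, ∑ b : Fin m, if a = b then g a * g b else 0)
      = ∑ a : Fin m, (g a)^2 := by
    refine Finset.sum_congr rfl fun a _ => ?_
    simp [Finset.sum_ite_eq, sq]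
  have h6 : ∑ a : Fin m, (∑ b : Fin m, if b.val < a.val then g b else 0) * g a
      = ∑ a : Fin m, ∑ b : Fin m, if b.val < a.val then g b * g a else 0 := by
    refine Finset.sum_congr rfl fun a _ => ?_
    rw [Finset.sum_mul]
    exact Finset.sum_congr rfl fun b _ => by split <;> simp
  rw [h6]
  rw [h4, h5] at h3
  linarith

/-- Non-positivity of the quantity `C(w)` of the paper: for positive integers
`h ≤ t`, `n = h·t`, any permutation `w` of `{1,…,h}`, and
`n_a = t - a + w(a)`, `u_a = (t-h)/2 - (w(a)-1)`, one has
`Σ_{a=1}^h [ (1-n)/2 + Σ_{b=1}^{a-1} n_b - u_a ]·n_a ≤ 0`.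
(Here `a : Fin h` is `0`-based, so `n_a = t - a.val + w(a).val` and
`u_a = (t-h)/2 - (w a).val`.) -/
theorem statement12 (h t : ℕ) (hh : 1 ≤ h) (hht : h ≤ t) (w : Equiv.Perm (Fin h)) :
    ∑ a : Fin h,
      ((1 - (h : ℚ) * (t : ℚ)) / 2
        + (∑ b : Fin h, if b.val < a.val then ((t : ℚ) - (b.val : ℚ) + ((w b).val : ℚ)) else 0)
        - (((t : ℚ) - (h : ℚ)) / 2 - ((w a).val : ℚ)))
      * ((t : ℚ) - (a.val : ℚ) + ((w a).val : ℚ))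
    ≤ 0 := by
  have hW1 : ∑ a : Fin h, (((w a).val : ℕ) : ℚ) = ∑ a : Fin h, ((a.val : ℕ) : ℚ) :=
    Equiv.sum_comp w (fun a : Fin h => ((a.val : ℕ) : ℚ))
  have hW2 : ∑ a : Fin h, (((w a).val : ℕ) : ℚ)^2 = ∑ a : Fin h, ((a.val : ℕ) : ℚ)^2 :=
    Equiv.sum_comp w (fun a : Fin h => ((a.val : ℕ) : ℚ)^2)
  have hP1 : ∑ a : Fin h, ((a.val : ℕ) : ℚ) = (h : ℚ) * ((h : ℚ) - 1) / 2 := by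
    rw [Fin.sum_univ_eq_sum_range (fun i => (i : ℚ)) h]
    have h2 := Finset.sum_range_id_mul_two h
    have h3 : ((∑ i ∈ Finset.range h, i : ℕ) : ℚ) * 2 = (h : ℚ) * ((h : ℚ) - 1) := by
      rw [← Nat.cast_ofNat, ← Nat.cast_mul, h2]
      push_cast [Nat.cast_sub hh]
      ring
    push_cast at h3 ⊢
    linarith
  -- sum of N
  have hSumN : ∑ a : Fin h, ((t : ℚ) - (a.val : ℚ) + ((w a).val : ℚ)) = (h : ℚ) * (t : ℚ) := by
    rw [Finset.sum_add_distrib, hW1, Finset.sum_sub_distrib]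
    simp [Finset.sum_const, Finset.card_univ, mul_comm]
  -- sum of N^2
  have hAux : ∑ a : Fin h, (((t : ℚ) - (a.val : ℚ) + ((w a).val : ℚ))^2
        + 2 * ((a.val : ℚ) * ((w a).val : ℚ)) + 2 * (t : ℚ) * (a.val : ℚ))
      = ∑ a : Fin h, ((t : ℚ)^2 + ((a.val : ℚ))^2 + (((w a).val : ℚ))^2
        + 2 * (t : ℚ) * ((w a).val : ℚ)) :=
    Finset.sum_congr rfl fun a _ => by ring
  rw [Finset.sum_add_distrib, Finset.sum_add_distrib, Finset.sum_add_distrib,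
      Finset.sum_add_distrib, Finset.sum_add_distrib] at hAux
  simp only [← Finset.mul_sum] at hAux
  rw [hW1, hW2] at hAux
  simp only [Finset.sum_const, Finset.card_univ, Fintype.card_fin, nsmul_eq_mul] at hAux
  have hSumN2 : ∑ a : Fin h, ((t : ℚ) - (a.val : ℚ) + ((w a).val : ℚ))^2
      = (h : ℚ) * (t : ℚ)^2 + 2 * (∑ a : Fin h, ((a.val : ℚ))^2)
        - 2 * (∑ a : Fin h, (a.val : ℚ) * ((w a).val : ℚ)) := by linarith
  -- sum of w*N
  have hAux2 : ∑ a : Fin h, (((w a).val : ℚ) * ((t : ℚ) - (a.val : ℚ) + ((w a).val : ℚ))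
        + (a.val : ℚ) * ((w a).val : ℚ))
      = ∑ a : Fin h, ((t : ℚ) * ((w a).val : ℚ) + (((w a).val : ℚ))^2) :=
    Finset.sum_congr rfl fun a _ => by ring
  rw [Finset.sum_add_distrib, Finset.sum_add_distrib] at hAux2
  simp only [← Finset.mul_sum] at hAux2
  rw [hW1, hW2] at hAux2
  have hWN : ∑ a : Fin h, ((w a).val : ℚ) * ((t : ℚ) - (a.val : ℚ) + ((w a).val : ℚ))
      = (t : ℚ) * (∑ a : Fin h, ((a.val : ℕ) : ℚ))
        - (∑ a : Fin h, (a.val : ℚ) * ((w a).val : ℚ))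
        + ∑ a : Fin h, ((a.val : ℚ))^2 := by linarith
  -- split the main sum
  have hsplit : ∑ a : Fin h,
      ((1 - (h : ℚ) * (t : ℚ)) / 2
        + (∑ b : Fin h, if b.val < a.val then ((t : ℚ) - (b.val : ℚ) + ((w b).val : ℚ)) else 0)
        - (((t : ℚ) - (h : ℚ)) / 2 - ((w a).val : ℚ)))
      * ((t : ℚ) - (a.val : ℚ) + ((w a).val : ℚ))
      = (∑ a : Fin h, (∑ b : Fin h, if b.val < a.val then ((t : ℚ) - (b.val : ℚ) + ((w b).val : ℚ)) else 0)
          * ((t : ℚ) - (a.val : ℚ) + ((w a).val : ℚ)))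
        + ((1 - (h : ℚ) * (t : ℚ)) / 2 - ((t : ℚ) - (h : ℚ)) / 2)
          * (∑ a : Fin h, ((t : ℚ) - (a.val : ℚ) + ((w a).val : ℚ)))
        + ∑ a : Fin h, ((w a).val : ℚ) * ((t : ℚ) - (a.val : ℚ) + ((w a).val : ℚ)) := by
    rw [Finset.mul_sum, ← Finset.sum_add_distrib, ← Finset.sum_add_distrib]
    exact Finset.sum_congr rfl fun a _ => by ring
  have htri := tri_aux_statement12 h (fun a : Fin h => (t : ℚ) - (a.val : ℚ) + ((w a).val : ℚ))
  rw [hsplit, htri, hSumN, hSumN2, hWN, hP1]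
  have hT : (h : ℚ) ≤ (t : ℚ) := by exact_mod_cast hht
  have h0 : (0 : ℚ) ≤ (h : ℚ) := by positivity
  have t0 : (0 : ℚ) ≤ (t : ℚ) := by positivity
  nlinarith [mul_nonneg h0 t0, mul_nonneg (mul_nonneg h0 t0) (sub_nonneg.2 hT)]
end
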